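/- arXiv:1410.2507 — 3 statements merged into one kernel-verified Lean document; each statement's English description precedes it below -/
import Mathlib

section
/- Define R(z) = √(2π) e^{-z} z^{z+1/2} / Γ(z+1) for z > 0. Then R is increasing on (0,∞), R(z) < 1 for all z > 0, and R(z) → 1 as z → ∞. -/
open Real Filter

/-- `R(z) = √(2π) e^{-z} z^{z+1/2} / Γ(z+1)`. -/
noncomputable def stirlingR (z : ℝ) : ℝ :=
  Real.sqrt (2 * Real.pi) * Real.exp (-z) * z ^ (z + 1 / 2) / Real.Gamma (z + 1)

set_option linter.unusedTactic false
set_option linter.unusedVariables false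

lemma log_lb {x : ℝ} (hx : 0 < x) : 2*x/(2+x) < Real.log (1+x) := by
  have key : StrictMonoOn (fun x : ℝ => Real.log (1+x) - 2*x/(2+x)) (Set.Ici 0) := by
    apply strictMonoOn_of_deriv_pos (convex_Ici 0)
    · apply ContinuousOn.sub
      · exact (continuousOn_const.add continuousOn_id).log (fun y hy => ne_of_gt (by have := Set.mem_Ici.mp hy; (try simp only [Pi.add_apply, id_eq]); nlinarith))
      · exact (continuousOn_const.mul continuousOn_id).div (continuousOn_const.add continuousOn_id)
          (fun y hy => ne_of_gt (by have := Set.mem_Ici.mp hy; (try simp only [Pi.add_apply, id_eq]); nlinarith))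
    · intro y hy
      rw [interior_Ici] at hy
      simp only [Set.mem_Ioi] at hy
      have h1 : (1:ℝ) + y ≠ 0 := by nlinarith
      have h2 : (2:ℝ) + y ≠ 0 := by nlinarith
      have d1 : HasDerivAt (fun x : ℝ => Real.log (1+x)) (1/(1+y)) y := by
        simpa using ((hasDerivAt_id y).const_add 1).log h1
      have d2 : HasDerivAt (fun x : ℝ => 2*x/(2+x)) ((2*(2+y) - 2*y)/(2+y)^2) y := by
        simpa using ((hasDerivAt_id y).const_mul 2).fun_div ((hasDerivAt_id y).const_add 2) h2
      rw [(d1.fun_sub d2).deriv]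
      rw [div_sub_div _ _ h1 (pow_ne_zero 2 h2)]
      apply div_pos (by nlinarith) (by positivity)
  have := key (Set.self_mem_Ici) (Set.mem_Ici.2 hx.le) hx
  simpa using this

lemma log_ub {x : ℝ} (hx : 0 < x) : Real.log (1+x) < x*(x+2)/(2*(x+1)) := by
  have key : StrictMonoOn (fun x : ℝ => x*(x+2)/(2*(x+1)) - Real.log (1+x)) (Set.Ici 0) := by
    apply strictMonoOn_of_deriv_pos (convex_Ici 0)
    · apply ContinuousOn.sub
      · exact (continuousOn_id.mul (continuousOn_id.add continuousOn_const)).div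
          (continuousOn_const.mul (continuousOn_id.add continuousOn_const))
          (fun y hy => ne_of_gt (by have := Set.mem_Ici.mp hy; (try simp only [Pi.add_apply, id_eq]); nlinarith))
      · exact (continuousOn_const.add continuousOn_id).log (fun y hy => ne_of_gt (by have := Set.mem_Ici.mp hy; (try simp only [Pi.add_apply, id_eq]); nlinarith))
    · intro y hy
      rw [interior_Ici] at hy
      simp only [Set.mem_Ioi] at hy
      have h1 : (1:ℝ) + y ≠ 0 := by nlinarith
      have h2 : 2*(y+1) ≠ 0 := by nlinarith
      have d1 : HasDerivAt (fun x : ℝ => Real.log (1+x)) (1/(1+y)) y := by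
        simpa using ((hasDerivAt_id y).const_add 1).log h1
      have d2 : HasDerivAt (fun x : ℝ => x*(x+2)/(2*(x+1)))
          (((1*(y+2) + y*1)*(2*(y+1)) - y*(y+2)*(2*1))/(2*(y+1))^2) y := by
        exact ((hasDerivAt_id y).mul ((hasDerivAt_id y).add_const 2)).div
          (((hasDerivAt_id y).add_const 1).const_mul 2) h2
      rw [(d2.fun_sub d1).deriv]
      rw [div_sub_div _ _ (pow_ne_zero 2 h2) h1]
      apply div_pos (by nlinarith [pow_pos hy 3, pow_pos hy 2]) (by nlinarith)
  have := key (Set.self_mem_Ici) (Set.mem_Ici.2 hx.le) hx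
  simpa using this

noncomputable def BB (z : ℝ) : ℝ :=
  Real.log (Real.Gamma (z+1)) - (z + 1/2) * Real.log z + z - Real.log (Real.sqrt (2*Real.pi))

noncomputable def gg (w : ℝ) : ℝ := (w + 1/2) * (Real.log (w+1) - Real.log w) - 1


lemma gg_pos {w : ℝ} (hw : 0 < w) : 0 < gg w := by
  have h : Real.log (w+1) - Real.log w = Real.log (1 + 1/w) := by
    rw [← Real.log_div (by positivity) (ne_of_gt hw)]
    congr 1; field_simp
  have hlb := log_lb (x := 1/w) (by positivity)
  have : (w + 1/2) * (2*(1/w)/(2+1/w)) = 1 := by field_simp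
  rw [gg, h, sub_pos]
  calc (1:ℝ) = (w + 1/2) * (2*(1/w)/(2+1/w)) := this.symm
    _ < _ := mul_lt_mul_of_pos_left hlb (by positivity)

lemma gg_anti : StrictAntiOn gg (Set.Ioi 0) := by
  apply strictAntiOn_of_deriv_neg (convex_Ioi 0)
  · apply ContinuousOn.sub _ continuousOn_const
    apply ContinuousOn.mul (continuousOn_id.add continuousOn_const)
    apply ContinuousOn.sub
    · exact (continuousOn_id.add continuousOn_const).log
        (fun y hy => by have := Set.mem_Ioi.mp hy; simp only [Pi.add_apply, id_eq]; nlinarith)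
    · exact continuousOn_id.log (fun y hy => ne_of_gt (Set.mem_Ioi.mp hy))
  · intro w hw
    rw [interior_Ioi] at hw
    have hw : 0 < w := hw
    have h1 : w + 1 ≠ 0 := by positivity
    have d : HasDerivAt gg ((Real.log (w+1) - Real.log w) + (w + 1/2) * (1/(w+1) - 1/w)) w := by
      have d1 : HasDerivAt (fun x : ℝ => Real.log (x+1)) (1/(w+1)) w := by
        simpa using ((hasDerivAt_id w).add_const 1).log h1
      have d2 : HasDerivAt (fun x : ℝ => Real.log x) (1/w) w := by
        simpa using Real.hasDerivAt_log (ne_of_gt hw)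
      have := (((hasDerivAt_id w).add_const (1/2)).fun_mul (d1.fun_sub d2)).sub_const 1
      exact this.congr_deriv (by simp only [id_eq]; ring)
    rw [d.deriv]
    have h : Real.log (w+1) - Real.log w = Real.log (1 + 1/w) := by
      rw [← Real.log_div (by positivity) (ne_of_gt hw)]
      congr 1; field_simp
    have hub := log_ub (x := 1/w) (by positivity)
    have he : (1/w)*(1/w+2)/(2*(1/w+1)) = -((w + 1/2) * (1/(w+1) - 1/w)) := by
      field_simp; ring
    rw [h]
    have := hub.trans_eq he
    linarith

lemma BB_rec {w : ℝ} (hw : 0 < w) : BB w = gg w + BB (w+1) := by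
  have hG : Real.Gamma (w+1+1) = (w+1) * Real.Gamma (w+1) := Real.Gamma_add_one (by positivity)
  have hGpos : 0 < Real.Gamma (w+1) := Real.Gamma_pos_of_pos (by positivity)
  rw [BB, BB, gg, hG, Real.log_mul (by positivity) (ne_of_gt hGpos)]
  ring

lemma BB_telescope {z : ℝ} (hz : 0 < z) (n : ℕ) :
    BB z = (∑ k ∈ Finset.range n, gg (z+k)) + BB (z+n) := by
  induction n with
  | zero => simp
  | succ n ih =>
    rw [ih, Finset.sum_range_succ, BB_rec (show 0 < z + n by positivity)]
    push_cast
    ring_nf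


lemma BB_nat (m : ℕ) (hm : 1 ≤ m) :
    BB m = Real.log (Stirling.stirlingSeq m) - Real.log (Real.sqrt π) := by
  have hm0 : (0:ℝ) < m := by exact_mod_cast hm
  rw [BB, Stirling.log_stirlingSeq_formula, Real.Gamma_nat_eq_factorial,
    Real.log_mul two_ne_zero (ne_of_gt hm0),
    Real.log_div (ne_of_gt hm0) (Real.exp_ne_zero 1), Real.log_exp,
    Real.log_sqrt (by positivity), Real.log_sqrt Real.pi_pos.le,
    Real.log_mul two_ne_zero (ne_of_gt Real.pi_pos)]
  ring

lemma BB_nat_tendsto : Tendsto (fun m : ℕ => BB m) atTop (nhds 0) := by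
  have h1 : Tendsto (fun m : ℕ => Real.log (Stirling.stirlingSeq m) - Real.log (Real.sqrt π))
      atTop (nhds 0) := by
    have : Tendsto (fun m : ℕ => Real.log (Stirling.stirlingSeq m)) atTop
        (nhds (Real.log (Real.sqrt π))) :=
      ((Real.continuousAt_log (ne_of_gt (Real.sqrt_pos.2 Real.pi_pos))).tendsto).comp
        Stirling.tendsto_stirlingSeq_sqrt_pi
    have := this.sub (tendsto_const_nhds (x := Real.log (Real.sqrt π)) (f := atTop))
    simpa using this
  apply h1.congr'
  filter_upwards [eventually_ge_atTop 1] with m hm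
  exact (BB_nat m hm).symm

lemma logGamma_ub {m : ℕ} (hm : 1 ≤ m) {t : ℝ} (ht : 0 ≤ t) (ht1 : t ≤ 1) :
    Real.log (Real.Gamma (m + t + 1)) ≤
      (1-t) * Real.log (Real.Gamma (m+1)) + t * Real.log (Real.Gamma (m+2)) := by
  have hm0 : (0:ℝ) < m := by exact_mod_cast hm
  have h := Real.convexOn_log_Gamma.2 (Set.mem_Ioi.2 (show (0:ℝ) < m+1 by linarith))
    (Set.mem_Ioi.2 (show (0:ℝ) < m+2 by linarith)) (by linarith : 0 ≤ 1-t) ht (by ring)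
  simp only [smul_eq_mul, Function.comp_apply] at h
  have he : (1-t) * ((m:ℝ)+1) + t * ((m:ℝ)+2) = (m:ℝ) + t + 1 := by ring
  rwa [he] at h

lemma logGamma_lb {m : ℕ} (hm : 1 ≤ m) {t : ℝ} (ht : 0 ≤ t) (ht1 : t ≤ 1) :
    Real.log (Real.Gamma (m+1)) + t * Real.log m ≤ Real.log (Real.Gamma (m + t + 1)) := by
  have hm0 : (0:ℝ) < m := by exact_mod_cast hm
  have hs0 : (0:ℝ) < 1 + t := by linarith
  have h := Real.convexOn_log_Gamma.2 (Set.mem_Ioi.2 hm0)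
    (Set.mem_Ioi.2 (show (0:ℝ) < m + t + 1 by linarith))
    (show 0 ≤ t/(1+t) by positivity) (show 0 ≤ 1/(1+t) by positivity)
    (by field_simp; ring)
  simp only [smul_eq_mul, Function.comp_apply] at h
  have he : t/(1+t) * (m:ℝ) + 1/(1+t) * ((m:ℝ) + t + 1) = (m:ℝ) + 1 := by field_simp; ring
  rw [he] at h
  have hG : Real.log (Real.Gamma ((m:ℝ)+1)) = Real.log m + Real.log (Real.Gamma m) := by
    rw [Real.Gamma_add_one (ne_of_gt hm0),
      Real.log_mul (ne_of_gt hm0) (ne_of_gt (Real.Gamma_pos_of_pos hm0))]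
  -- from h : log Γ(m+1) ≤ t/(1+t) * log Γ(m) + 1/(1+t) * log Γ(m+t+1)
  -- multiply by (1+t):
  have h2 : (1+t) * Real.log (Real.Gamma ((m:ℝ)+1)) ≤
      t * Real.log (Real.Gamma m) + Real.log (Real.Gamma ((m:ℝ) + t + 1)) := by
    have := mul_le_mul_of_nonneg_left h hs0.le
    calc (1+t) * Real.log (Real.Gamma ((m:ℝ)+1))
        ≤ (1+t) * (t/(1+t) * Real.log (Real.Gamma m) + 1/(1+t) * Real.log (Real.Gamma ((m:ℝ)+t+1))) := this
      _ = t * Real.log (Real.Gamma m) + Real.log (Real.Gamma ((m:ℝ) + t + 1)) := by field_simp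
  nlinarith [hG]

lemma E_tendsto {t : ℝ} (_ht : 0 ≤ t) :
    Tendsto (fun m : ℕ => t - ((m:ℝ) + t + 1/2) * Real.log (1 + t/m)) atTop (nhds 0) := by
  have hc : Tendsto (fun m : ℕ => Real.log (1 + t/m)) atTop (nhds 0) := by
    have h0 : Tendsto (fun m : ℕ => 1 + t/(m:ℝ)) atTop (nhds 1) := by
      have := tendsto_const_div_atTop_nhds_zero_nat t
      simpa using tendsto_const_nhds.add this
    have := (Real.continuousAt_log one_ne_zero).tendsto.comp h0
    simpa [Function.comp_def] using this
  have h1 : Tendsto (fun m : ℕ => (m:ℝ) * Real.log (1 + t/m)) atTop (nhds t) :=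
    (Real.tendsto_mul_log_one_add_div_atTop t).comp tendsto_natCast_atTop_atTop
  have h2 : Tendsto (fun m : ℕ => (t + 1/2) * Real.log (1 + t/m)) atTop (nhds 0) := by
    simpa using hc.const_mul (t + 1/2)
  have h3 : Tendsto (fun m : ℕ => ((m:ℝ) + t + 1/2) * Real.log (1 + t/m)) atTop (nhds t) := by
    have := h1.add h2
    simp only [add_zero] at this
    apply this.congr
    intro m; ring
  have := (tendsto_const_nhds (x := t) (f := atTop (α := ℕ))).sub h3
  simpa using this

lemma BB_frac_tendsto {t : ℝ} (ht : 0 ≤ t) (ht1 : t ≤ 1) :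
    Tendsto (fun m : ℕ => BB (m + t)) atTop (nhds 0) := by
  set E : ℕ → ℝ := fun m => t - ((m:ℝ) + t + 1/2) * Real.log (1 + t/m) with hE
  have hUt : Tendsto (fun m : ℕ => BB m + (E m + t * Real.log (1 + 1/(m:ℝ)))) atTop (nhds 0) := by
    have hl : Tendsto (fun m : ℕ => t * Real.log (1 + 1/(m:ℝ))) atTop (nhds 0) := by
      have h0 : Tendsto (fun m : ℕ => 1 + 1/(m:ℝ)) atTop (nhds 1) := by
        have := tendsto_const_div_atTop_nhds_zero_nat (1:ℝ)
        simpa using tendsto_const_nhds.add this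
      have := ((Real.continuousAt_log one_ne_zero).tendsto.comp h0).const_mul t
      simpa using this
    have := BB_nat_tendsto.add ((E_tendsto ht).add hl)
    simpa only [add_zero] using this
  have hLt : Tendsto (fun m : ℕ => BB m + E m) atTop (nhds 0) := by
    have := BB_nat_tendsto.add (E_tendsto ht)
    simpa only [add_zero] using this
  apply tendsto_of_tendsto_of_tendsto_of_le_of_le' hLt hUt
  · -- lower bound : BB m + E m ≤ BB (m + t)
    filter_upwards [eventually_ge_atTop 1] with m hm
    have hm0 : (0:ℝ) < m := by exact_mod_cast hm
    have hmt : (0:ℝ) < m + t := by linarith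
    have hlb := logGamma_lb hm ht ht1
    have hlog : Real.log ((m:ℝ) + t) = Real.log m + Real.log (1 + t/m) := by
      rw [← Real.log_mul (ne_of_gt hm0) (by positivity)]
      congr 1; field_simp
    simp only [BB, hE]
    rw [hlog]
    nlinarith [hlb]
  · -- upper bound : BB (m+t) ≤ BB m + (E m + t * log(1+1/m))
    filter_upwards [eventually_ge_atTop 1] with m hm
    have hm0 : (0:ℝ) < m := by exact_mod_cast hm
    have hmt : (0:ℝ) < m + t := by linarith
    have hub := logGamma_ub hm ht ht1
    have hG2 : Real.log (Real.Gamma ((m:ℝ)+2)) =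
        Real.log ((m:ℝ)+1) + Real.log (Real.Gamma ((m:ℝ)+1)) := by
      rw [show (m:ℝ)+2 = ((m:ℝ)+1)+1 by ring, Real.Gamma_add_one (by positivity),
        Real.log_mul (by positivity) (ne_of_gt (Real.Gamma_pos_of_pos (by positivity)))]
    have hlog : Real.log ((m:ℝ) + t) = Real.log m + Real.log (1 + t/m) := by
      rw [← Real.log_mul (ne_of_gt hm0) (by positivity)]
      congr 1; field_simp
    have hlog2 : Real.log ((m:ℝ) + 1) = Real.log m + Real.log (1 + 1/m) := by
      rw [← Real.log_mul (ne_of_gt hm0) (by positivity)]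
      congr 1; field_simp
    simp only [BB, hE]
    rw [hlog]
    nlinarith [hub, hG2, hlog2]

lemma BB_tail {z : ℝ} (hz : 0 < z) :
    Tendsto (fun n : ℕ => BB (z + n)) atTop (nhds 0) := by
  set t : ℝ := z - ⌊z⌋₊ with hts
  have ht : 0 ≤ t := by
    simp only [hts, sub_nonneg]
    exact Nat.floor_le hz.le
  have ht1 : t ≤ 1 := by
    have := Nat.lt_floor_add_one z
    simp only [hts]; linarith
  have hcomp := (BB_frac_tendsto ht ht1).comp (tendsto_add_atTop_nat ⌊z⌋₊)
  apply hcomp.congr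
  intro n
  simp only [Function.comp_apply]
  congr 1
  push_cast
  simp only [hts]
  ring

lemma BB_pos {z : ℝ} (hz : 0 < z) : 0 < BB z := by
  have htail := BB_tail hz
  have hbd : ∀ n : ℕ, 1 ≤ n → BB (z + n) ≤ BB z - gg z := by
    intro n hn
    have htel := BB_telescope hz n
    have hsum : gg z ≤ ∑ k ∈ Finset.range n, gg (z + k) := by
      have h0 : (0:ℕ) ∈ Finset.range n := Finset.mem_range.2 hn
      have := Finset.single_le_sum (f := fun k : ℕ => gg (z + k))
        (fun i _ => (gg_pos (by positivity)).le) h0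
      simpa using this
    linarith
  have h0 : (0:ℝ) ≤ BB z - gg z :=
    le_of_tendsto htail (eventually_atTop.2 ⟨1, hbd⟩)
  linarith [gg_pos hz]

lemma BB_anti : StrictAntiOn BB (Set.Ioi 0) := by
  intro a ha b hb hab
  have ha : (0:ℝ) < a := ha
  have hb : (0:ℝ) < b := hb
  have hbd : ∀ n : ℕ, 1 ≤ n →
      BB (a + n) - BB (b + n) ≤ (BB a - BB b) - (gg a - gg b) := by
    intro n hn
    have hta := BB_telescope ha n
    have htb := BB_telescope hb n
    have hsum : gg a - gg b ≤
        ∑ k ∈ Finset.range n, (gg (a + k) - gg (b + k)) := by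
      have h0 : (0:ℕ) ∈ Finset.range n := Finset.mem_range.2 hn
      have := Finset.single_le_sum (f := fun k : ℕ => gg (a + k) - gg (b + k))
        (fun i _ => by
          have : gg (b + i) < gg (a + i) :=
            gg_anti (Set.mem_Ioi.2 (by positivity)) (Set.mem_Ioi.2 (by positivity))
              (by linarith)
          linarith) h0
      simpa using this
    have hdist : ∑ k ∈ Finset.range n, (gg (a + k) - gg (b + k)) =
        (∑ k ∈ Finset.range n, gg (a + k)) - ∑ k ∈ Finset.range n, gg (b + k) :=
      Finset.sum_sub_distrib _ _
    rw [hdist] at hsum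
    linarith
  have htail := (BB_tail ha).sub (BB_tail hb)
  rw [sub_zero] at htail
  have h0 : (0:ℝ) ≤ (BB a - BB b) - (gg a - gg b) :=
    le_of_tendsto htail (eventually_atTop.2 ⟨1, hbd⟩)
  have hg : gg b < gg a := gg_anti (Set.mem_Ioi.2 ha) (Set.mem_Ioi.2 hb) hab
  linarith

lemma BB_tendsto : Tendsto BB atTop (nhds 0) := by
  have hfl : Tendsto (fun x : ℝ => BB ⌊x⌋₊) atTop (nhds 0) :=
    BB_nat_tendsto.comp tendsto_nat_floor_atTop
  apply tendsto_of_tendsto_of_tendsto_of_le_of_le' tendsto_const_nhds hfl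
  · filter_upwards [eventually_ge_atTop (1:ℝ)] with x hx
    exact (BB_pos (by linarith)).le
  · filter_upwards [eventually_ge_atTop (1:ℝ)] with x hx
    have h1 : (1:ℝ) ≤ ⌊x⌋₊ := by exact_mod_cast Nat.one_le_floor_iff x |>.2 hx
    exact BB_anti.antitoneOn (Set.mem_Ioi.2 (by linarith)) (Set.mem_Ioi.2 (by linarith))
      (Nat.floor_le (by linarith))

lemma R_eq {z : ℝ} (hz : 0 < z) : stirlingR z = Real.exp (-BB z) := by
  have hG : 0 < Real.Gamma (z+1) := Real.Gamma_pos_of_pos (by linarith)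
  have hs : (0:ℝ) < Real.sqrt (2*Real.pi) := Real.sqrt_pos.2 (by positivity)
  rw [stirlingR, Real.rpow_def_of_pos hz, BB]
  rw [show -(Real.log (Real.Gamma (z+1)) - (z + 1/2) * Real.log z + z
      - Real.log (Real.sqrt (2*Real.pi)))
    = Real.log (Real.sqrt (2*Real.pi)) + (-z) + Real.log z * (z + 1/2)
      - Real.log (Real.Gamma (z+1)) by ring]
  rw [Real.exp_sub, Real.exp_add, Real.exp_add, Real.exp_log hs, Real.exp_log hG]

theorem stirlingR_properties :
    StrictMonoOn stirlingR (Set.Ioi 0) ∧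
    (∀ z > (0 : ℝ), stirlingR z < 1) ∧
    Tendsto stirlingR atTop (nhds 1) := by
  refine ⟨?_, ?_, ?_⟩
  · intro a ha b hb hab
    rw [R_eq (Set.mem_Ioi.mp ha), R_eq (Set.mem_Ioi.mp hb)]
    exact Real.exp_lt_exp.2 (neg_lt_neg (BB_anti ha hb hab))
  · intro z hz
    rw [R_eq hz]
    calc Real.exp (-BB z) < Real.exp 0 :=
          Real.exp_lt_exp.2 (by linarith [BB_pos hz])
      _ = 1 := Real.exp_zero
  · have h : Tendsto (fun x : ℝ => Real.exp (-BB x)) atTop (nhds 1) := by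
      have hn : Tendsto (fun x : ℝ => -BB x) atTop (nhds 0) := by
        simpa using BB_tendsto.neg
      have := (Real.continuous_exp.tendsto 0).comp hn
      simpa [Function.comp_def] using this
    apply h.congr'
    filter_upwards [eventually_gt_atTop (0:ℝ)] with x hx
    exact (R_eq hx).symm
end

section
/- If ξ is gamma distributed with shape x/b and scale b (x > 0, b > 0), and f : (0,∞) → ℝ is twice continuously differentiable with bounded second derivative, then E[f(ξ)] = f(x) + (xb/2) f''(x) + o(b) as b → 0⁺. -/
open Real MeasureTheory Filter

/-- The gamma kernel `K_{ρ,b}` with `ρ = x/b`, i.e. the gamma density with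
shape `x/b` and scale `b`. -/
noncomputable def gammaKernel (x b t : ℝ) : ℝ :=
  t ^ (x / b - 1) * Real.exp (-t / b) / (b ^ (x / b) * Real.Gamma (x / b))

lemma gk_nonneg (x b : ℝ) (hx : 0 < x) (hb : 0 < b) {t : ℝ} (ht : t ∈ Set.Ioi (0:ℝ)) :
    0 ≤ gammaKernel x b t := by
  rw [Set.mem_Ioi] at ht
  unfold gammaKernel
  apply div_nonneg (mul_nonneg (Real.rpow_nonneg ht.le _) (Real.exp_nonneg _))
  exact mul_nonneg (Real.rpow_nonneg hb.le _)
    (Real.Gamma_nonneg_of_nonneg (div_nonneg hx.le hb.le))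

lemma gk_contOn (x b : ℝ) : ContinuousOn (gammaKernel x b) (Set.Ioi 0) := by
  unfold gammaKernel
  apply ContinuousOn.div_const
  apply ContinuousOn.mul
  · intro t ht
    exact (Real.continuousAt_rpow_const t _ (Or.inl (ne_of_gt ht))).continuousWithinAt
  · exact (Real.continuous_exp.comp (continuous_neg.div_const b)).continuousOn

lemma momRpow (x b p : ℝ) (hx : 0 < x) (hb : 0 < b) (hp : 0 < x / b + p) :
    ∫ t in Set.Ioi (0:ℝ), t ^ p * gammaKernel x b t
      = b ^ p * Real.Gamma (x / b + p) / Real.Gamma (x / b) := by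
  have ha : 0 < x / b := div_pos hx hb
  have hΓ : 0 < Real.Gamma (x / b) := Real.Gamma_pos_of_pos ha
  have hbp : (0:ℝ) < b ^ (x / b) := Real.rpow_pos_of_pos hb _
  have key : ∫ t in Set.Ioi (0:ℝ), t ^ (x / b + p - 1) * Real.exp (-(b⁻¹ * t))
      = (1 / b⁻¹) ^ (x / b + p) * Real.Gamma (x / b + p) :=
    Real.integral_rpow_mul_exp_neg_mul_Ioi hp (inv_pos.mpr hb)
  have congr1 : Set.EqOn (fun t => t ^ p * gammaKernel x b t)
      (fun t => (t ^ (x / b + p - 1) * Real.exp (-(b⁻¹ * t)))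
        / (b ^ (x / b) * Real.Gamma (x / b))) (Set.Ioi 0) := by
    intro t ht
    rw [Set.mem_Ioi] at ht
    simp only [gammaKernel]
    rw [show x / b + p - 1 = p + (x / b - 1) by ring, Real.rpow_add ht,
      show -t / b = -(b⁻¹ * t) by ring]
    ring
  rw [setIntegral_congr_fun measurableSet_Ioi congr1, integral_div, key,
    one_div, inv_inv, Real.rpow_add hb]
  field_simp

lemma intRpow (x b p : ℝ) (hx : 0 < x) (hb : 0 < b) (hp : 0 < x / b + p) :
    MeasureTheory.IntegrableOn (fun t => t ^ p * gammaKernel x b t) (Set.Ioi (0:ℝ)) := by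
  have base : MeasureTheory.IntegrableOn
      (fun t : ℝ => t ^ (x / b + p - 1) * Real.exp (-b⁻¹ * t ^ (1:ℝ))) (Set.Ioi 0) :=
    integrableOn_rpow_mul_exp_neg_mul_rpow (by linarith) one_pos (inv_pos.mpr hb)
  have base2 := (base.const_mul ((b ^ (x / b) * Real.Gamma (x / b))⁻¹))
  apply MeasureTheory.IntegrableOn.congr_fun base2 ?_ measurableSet_Ioi
  intro t ht
  rw [Set.mem_Ioi] at ht
  simp only [Real.rpow_one, gammaKernel]
  rw [show x / b + p - 1 = p + (x / b - 1) by ring, Real.rpow_add ht,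
    show -b⁻¹ * t = -t / b by ring]
  ring

lemma momNat (x b : ℝ) (hx : 0 < x) (hb : 0 < b) (n : ℕ) :
    ∫ t in Set.Ioi (0:ℝ), t ^ n * gammaKernel x b t
      = b ^ n * Real.Gamma (x / b + n) / Real.Gamma (x / b) := by
  have hp : 0 < x / b + (n:ℝ) :=
    add_pos_of_pos_of_nonneg (div_pos hx hb) (Nat.cast_nonneg n)
  have h := momRpow x b n hx hb hp
  rw [Real.rpow_natCast] at h
  rw [← h]
  refine setIntegral_congr_fun measurableSet_Ioi (fun t ht => ?_)
  simp [Real.rpow_natCast]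

lemma intNat (x b : ℝ) (hx : 0 < x) (hb : 0 < b) (n : ℕ) :
    MeasureTheory.IntegrableOn (fun t => t ^ n * gammaKernel x b t) (Set.Ioi (0:ℝ)) := by
  have hp : 0 < x / b + (n:ℝ) :=
    add_pos_of_pos_of_nonneg (div_pos hx hb) (Nat.cast_nonneg n)
  apply (intRpow x b n hx hb hp).congr_fun ?_ measurableSet_Ioi
  intro t ht
  simp [Real.rpow_natCast]

section Moments
variable (x b : ℝ) (hx : 0 < x) (hb : 0 < b)
include hx hb

lemma gammaFacts :
    Real.Gamma (x/b + 1) = (x/b) * Real.Gamma (x/b) ∧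
    Real.Gamma (x/b + 2) = (x/b+1) * ((x/b) * Real.Gamma (x/b)) ∧
    Real.Gamma (x/b + 3) = (x/b+2) * ((x/b+1) * ((x/b) * Real.Gamma (x/b))) ∧
    Real.Gamma (x/b + 4) = (x/b+3) * ((x/b+2) * ((x/b+1) * ((x/b) * Real.Gamma (x/b)))) := by
  have ha : 0 < x / b := div_pos hx hb
  have g1 : Real.Gamma (x/b + 1) = (x/b) * Real.Gamma (x/b) := Real.Gamma_add_one ha.ne'
  have g2 : Real.Gamma (x/b + 2) = (x/b+1) * ((x/b) * Real.Gamma (x/b)) := by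
    rw [show x/b + 2 = (x/b+1) + 1 by ring, Real.Gamma_add_one (by linarith), g1]
  have g3 : Real.Gamma (x/b + 3) = (x/b+2) * ((x/b+1) * ((x/b) * Real.Gamma (x/b))) := by
    rw [show x/b + 3 = (x/b+2) + 1 by ring, Real.Gamma_add_one (by linarith), g2]
  have g4 : Real.Gamma (x/b + 4) = (x/b+3) * ((x/b+2) * ((x/b+1) * ((x/b) * Real.Gamma (x/b)))) := by
    rw [show x/b + 4 = (x/b+3) + 1 by ring, Real.Gamma_add_one (by linarith), g3]
  exact ⟨g1, g2, g3, g4⟩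

lemma momVal :
    (∫ t in Set.Ioi (0:ℝ), t ^ (0:ℕ) * gammaKernel x b t) = 1 ∧
    (∫ t in Set.Ioi (0:ℝ), t ^ (1:ℕ) * gammaKernel x b t) = x ∧
    (∫ t in Set.Ioi (0:ℝ), t ^ (2:ℕ) * gammaKernel x b t) = x^2 + x*b ∧
    (∫ t in Set.Ioi (0:ℝ), t ^ (3:ℕ) * gammaKernel x b t) = x^3 + 3*x^2*b + 2*x*b^2 ∧
    (∫ t in Set.Ioi (0:ℝ), t ^ (4:ℕ) * gammaKernel x b t)
      = x^4 + 6*x^3*b + 11*x^2*b^2 + 6*x*b^3 := by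
  have ha : 0 < x / b := div_pos hx hb
  have hΓ : Real.Gamma (x/b) ≠ 0 := (Real.Gamma_pos_of_pos ha).ne'
  obtain ⟨g1, g2, g3, g4⟩ := gammaFacts x b hx hb
  refine ⟨?_, ?_, ?_, ?_, ?_⟩ <;>
    rw [momNat x b hx hb] <;> push_cast <;>
    [skip; rw [g1]; rw [g2]; rw [g3]; rw [g4]] <;>
    field_simp <;> ring
end Moments

section Central
variable (x b : ℝ) (hx : 0 < x) (hb : 0 < b)

private lemma e0 : (fun t : ℝ => gammaKernel x b t)
    = fun t => t ^ (0:ℕ) * gammaKernel x b t := funext fun t => by ring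
private lemma e1 : (fun t : ℝ => (t - x) * gammaKernel x b t)
    = fun t => t ^ (1:ℕ) * gammaKernel x b t - x * (t ^ (0:ℕ) * gammaKernel x b t) :=
  funext fun t => by ring
private lemma e2 : (fun t : ℝ => (t - x) ^ 2 * gammaKernel x b t)
    = fun t => t ^ (2:ℕ) * gammaKernel x b t - (2*x) * (t ^ (1:ℕ) * gammaKernel x b t)
        + x^2 * (t ^ (0:ℕ) * gammaKernel x b t) := funext fun t => by ring
private lemma e4 : (fun t : ℝ => (t - x) ^ 4 * gammaKernel x b t)
    = fun t => t ^ (4:ℕ) * gammaKernel x b t - (4*x) * (t ^ (3:ℕ) * gammaKernel x b t)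
        + (6*x^2) * (t ^ (2:ℕ) * gammaKernel x b t)
        - (4*x^3) * (t ^ (1:ℕ) * gammaKernel x b t)
        + x^4 * (t ^ (0:ℕ) * gammaKernel x b t) := funext fun t => by ring

include hx hb

lemma cint0 : MeasureTheory.IntegrableOn (fun t => gammaKernel x b t) (Set.Ioi (0:ℝ)) := by
  rw [e0]; exact intNat x b hx hb 0

lemma cint1 : MeasureTheory.IntegrableOn (fun t => (t - x) * gammaKernel x b t) (Set.Ioi (0:ℝ)) := by
  rw [e1]; exact (intNat x b hx hb 1).sub ((intNat x b hx hb 0).const_mul _)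

lemma cint2 : MeasureTheory.IntegrableOn (fun t => (t - x) ^ 2 * gammaKernel x b t) (Set.Ioi (0:ℝ)) := by
  rw [e2]
  exact ((intNat x b hx hb 2).sub ((intNat x b hx hb 1).const_mul _)).add
    ((intNat x b hx hb 0).const_mul _)

lemma cint4 : MeasureTheory.IntegrableOn (fun t => (t - x) ^ 4 * gammaKernel x b t) (Set.Ioi (0:ℝ)) := by
  rw [e4]
  exact ((((intNat x b hx hb 4).sub ((intNat x b hx hb 3).const_mul _)).add
    ((intNat x b hx hb 2).const_mul _)).sub ((intNat x b hx hb 1).const_mul _)).add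
    ((intNat x b hx hb 0).const_mul _)


lemma cmom0 : (∫ t in Set.Ioi (0:ℝ), gammaKernel x b t) = 1 := by
  rw [e0]; exact (momVal x b hx hb).1

lemma cmom1 : (∫ t in Set.Ioi (0:ℝ), (t - x) * gammaKernel x b t) = 0 := by
  obtain ⟨m0, m1, -, -, -⟩ := momVal x b hx hb
  have i1 : IntegrableOn (fun t : ℝ => t ^ (1:ℕ) * gammaKernel x b t) (Set.Ioi 0) :=
    intNat x b hx hb 1
  have i0 : IntegrableOn (fun t : ℝ => x * (t ^ (0:ℕ) * gammaKernel x b t)) (Set.Ioi 0) :=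
    (intNat x b hx hb 0).const_mul _
  rw [e1, integral_sub i1 i0, integral_const_mul, m0, m1]
  ring

lemma cmom2 : (∫ t in Set.Ioi (0:ℝ), (t - x) ^ 2 * gammaKernel x b t) = x * b := by
  obtain ⟨m0, m1, m2, -, -⟩ := momVal x b hx hb
  have i2 : IntegrableOn (fun t : ℝ => t ^ (2:ℕ) * gammaKernel x b t) (Set.Ioi 0) :=
    intNat x b hx hb 2
  have i1 : IntegrableOn (fun t : ℝ => (2*x) * (t ^ (1:ℕ) * gammaKernel x b t)) (Set.Ioi 0) :=
    (intNat x b hx hb 1).const_mul _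
  have i0 : IntegrableOn (fun t : ℝ => x^2 * (t ^ (0:ℕ) * gammaKernel x b t)) (Set.Ioi 0) :=
    (intNat x b hx hb 0).const_mul _
  have i21 : IntegrableOn (fun t : ℝ => t ^ (2:ℕ) * gammaKernel x b t
      - (2*x) * (t ^ (1:ℕ) * gammaKernel x b t)) (Set.Ioi 0) := i2.sub i1
  rw [e2, integral_add i21 i0, integral_sub i2 i1, integral_const_mul, integral_const_mul,
    m0, m1, m2]
  ring

lemma cmom4 : (∫ t in Set.Ioi (0:ℝ), (t - x) ^ 4 * gammaKernel x b t)
    = 3*x^2*b^2 + 6*x*b^3 := by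
  obtain ⟨m0, m1, m2, m3, m4⟩ := momVal x b hx hb
  have i4 : IntegrableOn (fun t : ℝ => t ^ (4:ℕ) * gammaKernel x b t) (Set.Ioi 0) :=
    intNat x b hx hb 4
  have i3 : IntegrableOn (fun t : ℝ => (4*x) * (t ^ (3:ℕ) * gammaKernel x b t)) (Set.Ioi 0) :=
    (intNat x b hx hb 3).const_mul _
  have i2 : IntegrableOn (fun t : ℝ => (6*x^2) * (t ^ (2:ℕ) * gammaKernel x b t)) (Set.Ioi 0) :=
    (intNat x b hx hb 2).const_mul _
  have i1 : IntegrableOn (fun t : ℝ => (4*x^3) * (t ^ (1:ℕ) * gammaKernel x b t)) (Set.Ioi 0) :=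
    (intNat x b hx hb 1).const_mul _
  have i0 : IntegrableOn (fun t : ℝ => x^4 * (t ^ (0:ℕ) * gammaKernel x b t)) (Set.Ioi 0) :=
    (intNat x b hx hb 0).const_mul _
  have i43 : IntegrableOn (fun t : ℝ => t ^ (4:ℕ) * gammaKernel x b t
      - (4*x) * (t ^ (3:ℕ) * gammaKernel x b t)) (Set.Ioi 0) := i4.sub i3
  have i432 : IntegrableOn (fun t : ℝ => t ^ (4:ℕ) * gammaKernel x b t
      - (4*x) * (t ^ (3:ℕ) * gammaKernel x b t)
      + (6*x^2) * (t ^ (2:ℕ) * gammaKernel x b t)) (Set.Ioi 0) := i43.add i2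
  have i4321 : IntegrableOn (fun t : ℝ => t ^ (4:ℕ) * gammaKernel x b t
      - (4*x) * (t ^ (3:ℕ) * gammaKernel x b t)
      + (6*x^2) * (t ^ (2:ℕ) * gammaKernel x b t)
      - (4*x^3) * (t ^ (1:ℕ) * gammaKernel x b t)) (Set.Ioi 0) := i432.sub i1
  rw [e4, integral_add i4321 i0, integral_sub i432 i1, integral_add i43 i2,
    integral_sub i4 i3, integral_const_mul, integral_const_mul, integral_const_mul,
    integral_const_mul, m0, m1, m2, m3, m4]
  ring
end Central

lemma abs_sub_le_of_uIcc {x t s : ℝ} (hs : s ∈ Set.uIcc x t) : |s - x| ≤ |t - x| := by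
  rcases le_total x t with h | h
  · rw [Set.uIcc_of_le h] at hs
    rw [abs_of_nonneg (by linarith [hs.1]), abs_of_nonneg (by linarith)]
    linarith [hs.2]
  · rw [Set.uIcc_of_ge h] at hs
    rw [abs_of_nonpos (by linarith [hs.2]), abs_of_nonpos (by linarith)]
    linarith [hs.1]

lemma quad_bound (f : ℝ → ℝ) (x t M : ℝ) (hx : 0 < x) (ht : 0 < t)
    (hdf : ∀ s ∈ Set.Ioi (0:ℝ), HasDerivAt f (deriv f s) s)
    (hdf' : ∀ s ∈ Set.Ioi (0:ℝ), HasDerivAt (deriv f) (deriv (deriv f) s) s)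
    (hM : ∀ s ∈ Set.uIcc x t, |deriv (deriv f) s - deriv (deriv f) x| ≤ M) :
    |f t - f x - deriv f x * (t - x) - deriv (deriv f) x / 2 * (t - x) ^ 2|
      ≤ M * (t - x) ^ 2 := by
  have hsub : Set.uIcc x t ⊆ Set.Ioi 0 := fun s hs => (lt_min hx ht).trans_le hs.1
  have hconv : Convex ℝ (Set.uIcc x t) := convex_uIcc x t
  set G1 : ℝ → ℝ := fun s => deriv f s - deriv f x - deriv (deriv f) x * (s - x) with hG1
  have hG1d : ∀ s ∈ Set.uIcc x t,
      HasDerivWithinAt G1 (deriv (deriv f) s - deriv (deriv f) x) (Set.uIcc x t) s := by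
    intro s hs
    have h1 : HasDerivAt G1 (deriv (deriv f) s - deriv (deriv f) x * 1) s :=
      ((hdf' s (hsub hs)).sub_const _).sub
        (((hasDerivAt_id s).sub_const x).const_mul _)
    simpa using h1.hasDerivWithinAt
  have step1 : ∀ s ∈ Set.uIcc x t, |G1 s| ≤ M * |t - x| := by
    intro s hs
    have hM0 : 0 ≤ M := by
      have := hM x Set.left_mem_uIcc
      simp at this
      linarith [abs_nonneg (deriv (deriv f) x - deriv (deriv f) x), this]
    have h2 := hconv.norm_image_sub_le_of_norm_hasDerivWithin_le hG1d
      (fun s hs => hM s hs) Set.left_mem_uIcc hs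
    have hG1x : G1 x = 0 := by simp [hG1]
    rw [hG1x, sub_zero, Real.norm_eq_abs, Real.norm_eq_abs] at h2
    exact h2.trans (mul_le_mul_of_nonneg_left (abs_sub_le_of_uIcc hs) hM0)
  set G0 : ℝ → ℝ := fun s => f s - f x - deriv f x * (s - x)
    - deriv (deriv f) x / 2 * (s - x) ^ 2 with hG0
  have hG0d : ∀ s ∈ Set.uIcc x t, HasDerivWithinAt G0 (G1 s) (Set.uIcc x t) s := by
    intro s hs
    have h1 : HasDerivAt G0
        (deriv f s - deriv f x * 1 - deriv (deriv f) x / 2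
          * (2 * (s - x) ^ 1 * 1)) s :=
      (((hdf s (hsub hs)).sub_const _).sub
        (((hasDerivAt_id s).sub_const x).const_mul _)).sub
        ((((hasDerivAt_id s).sub_const x).pow 2).const_mul _)
    have : HasDerivAt G0 (G1 s) s := by
      convert h1 using 1
      simp [hG1]; ring
    exact this.hasDerivWithinAt
  have step2 := hconv.norm_image_sub_le_of_norm_hasDerivWithin_le hG0d step1
    Set.left_mem_uIcc Set.right_mem_uIcc
  have hG0x : G0 x = 0 := by simp [hG0]
  rw [hG0x, sub_zero, Real.norm_eq_abs, Real.norm_eq_abs] at step2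
  calc |G0 t| ≤ M * |t - x| * |t - x| := step2
    _ = M * (t - x) ^ 2 := by rw [mul_assoc, abs_mul_abs_self]; ring

set_option maxHeartbeats 1000000 in
theorem gammaKernel_bias_expansion (x : ℝ) (hx : 0 < x) (f : ℝ → ℝ)
    (hf : ContDiffOn ℝ 2 f (Set.Ioi 0))
    (hbdd : ∃ C : ℝ, ∀ t ∈ Set.Ioi (0 : ℝ), |deriv (deriv f) t| ≤ C) :
    Tendsto (fun b : ℝ =>
        ((∫ t in Set.Ioi (0 : ℝ), f t * gammaKernel x b t)
          - f x - x * b / 2 * deriv (deriv f) x) / b)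
      (nhdsWithin 0 (Set.Ioi 0)) (nhds 0) := by
  obtain ⟨C, hC⟩ := hbdd
  have hC0 : 0 ≤ C := (abs_nonneg _).trans (hC x hx)
  -- derivative facts
  have hdf : ∀ s ∈ Set.Ioi (0:ℝ), HasDerivAt f (deriv f s) s := fun s hs =>
    ((hf.contDiffAt (isOpen_Ioi.mem_nhds hs)).differentiableAt
      (by norm_num : (2:WithTop ℕ∞) ≠ 0)).hasDerivAt
  have hf1 : ContDiffOn ℝ 1 (deriv f) (Set.Ioi 0) :=
    hf.deriv_of_isOpen isOpen_Ioi (by norm_num : (1:WithTop ℕ∞) + 1 ≤ 2)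
  have hdf' : ∀ s ∈ Set.Ioi (0:ℝ), HasDerivAt (deriv f) (deriv (deriv f) s) s := fun s hs =>
    ((hf1.contDiffAt (isOpen_Ioi.mem_nhds hs)).differentiableAt one_ne_zero).hasDerivAt
  have hcont2 : ContinuousOn (deriv (deriv f)) (Set.Ioi 0) :=
    hf1.continuousOn_deriv_of_isOpen isOpen_Ioi le_rfl
  have hcx : ContinuousAt (deriv (deriv f)) x := hcont2.continuousAt (isOpen_Ioi.mem_nhds hx)
  -- the Taylor remainder
  set g : ℝ → ℝ := fun t => f t - f x - deriv f x * (t - x)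
    - deriv (deriv f) x / 2 * (t - x) ^ 2 with hg
  set C2 : ℝ := C + |deriv (deriv f) x| + 1 with hC2def
  have hC2pos : 0 < C2 := by positivity
  have hgb : ∀ t ∈ Set.Ioi (0:ℝ), |g t| ≤ C2 * (t - x) ^ 2 := by
    intro t ht
    have hsub : Set.uIcc x t ⊆ Set.Ioi 0 := fun s hs => (lt_min hx ht).trans_le hs.1
    have h1 := quad_bound f x t (C + |deriv (deriv f) x|) hx ht hdf hdf' (fun s hs => by
      calc |deriv (deriv f) s - deriv (deriv f) x|
          ≤ |deriv (deriv f) s| + |deriv (deriv f) x| := abs_sub _ _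
        _ ≤ C + |deriv (deriv f) x| := by linarith [hC s (hsub hs)])
    refine h1.trans (mul_le_mul_of_nonneg_right ?_ (sq_nonneg _))
    rw [hC2def]; linarith
  have hgc : ContinuousOn g (Set.Ioi 0) := by
    apply ContinuousOn.sub
    apply ContinuousOn.sub
    apply ContinuousOn.sub hf.continuousOn continuousOn_const
    · exact (continuous_const.mul (continuous_id.sub continuous_const)).continuousOn
    · exact (continuous_const.mul ((continuous_id.sub continuous_const).pow 2)).continuousOn
  rw [Metric.tendsto_nhdsWithin_nhds]
  intro ε hε
  set ε1 : ℝ := ε / (2 * (x + 1)) with hε1def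
  have hε1 : 0 < ε1 := by positivity
  obtain ⟨δ, hδ0, hδ⟩ := Metric.continuousAt_iff.mp hcx ε1 hε1
  set q : ℝ := C2 / δ ^ 2 with hqdef
  have hq : 0 ≤ q := by positivity
  set A : ℝ := q * (3 * x ^ 2 + 6 * x) with hAdef
  have hA : 0 ≤ A := by positivity
  refine ⟨min 1 (ε / (2 * (A + 1))), lt_min one_pos (by positivity), ?_⟩
  intro b hbmem hbd
  rw [Set.mem_Ioi] at hbmem
  have hb : 0 < b := hbmem
  rw [Real.dist_eq, sub_zero, abs_of_pos hb] at hbd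
  have hb1 : b ≤ 1 := ((lt_min_iff.mp hbd).1).le
  have hb2 : b < ε / (2 * (A + 1)) := (lt_min_iff.mp hbd).2
  -- integrability of the remainder
  have hKnn : ∀ t ∈ Set.Ioi (0:ℝ), 0 ≤ gammaKernel x b t := fun t ht => gk_nonneg x b hx hb ht
  have hmeasg : AEStronglyMeasurable (fun t => g t * gammaKernel x b t)
      (volume.restrict (Set.Ioi 0)) :=
    (hgc.mul (gk_contOn x b)).aestronglyMeasurable measurableSet_Ioi
  have hig : MeasureTheory.IntegrableOn (fun t => g t * gammaKernel x b t) (Set.Ioi (0:ℝ)) := by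
    apply Integrable.mono' ((cint2 x b hx hb).const_mul C2) hmeasg
    rw [ae_restrict_iff' measurableSet_Ioi]
    filter_upwards with t
    intro ht
    rw [Real.norm_eq_abs, abs_mul, abs_of_nonneg (hKnn t ht), ← mul_assoc]
    exact mul_le_mul_of_nonneg_right (hgb t ht) (hKnn t ht)
  -- split the integral
  have j0 : MeasureTheory.IntegrableOn (fun t : ℝ => f x * gammaKernel x b t) (Set.Ioi (0:ℝ)) :=
    (cint0 x b hx hb).const_mul _
  have j1 : MeasureTheory.IntegrableOn
      (fun t : ℝ => deriv f x * ((t - x) * gammaKernel x b t)) (Set.Ioi (0:ℝ)) :=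
    (cint1 x b hx hb).const_mul _
  have j2 : MeasureTheory.IntegrableOn
      (fun t : ℝ => deriv (deriv f) x / 2 * ((t - x) ^ 2 * gammaKernel x b t)) (Set.Ioi (0:ℝ)) :=
    (cint2 x b hx hb).const_mul _
  have s1 : MeasureTheory.IntegrableOn
      (fun t : ℝ => g t * gammaKernel x b t + f x * gammaKernel x b t) (Set.Ioi (0:ℝ)) :=
    hig.add j0
  have s2 : MeasureTheory.IntegrableOn
      (fun t : ℝ => g t * gammaKernel x b t + f x * gammaKernel x b t
        + deriv f x * ((t - x) * gammaKernel x b t)) (Set.Ioi (0:ℝ)) := s1.add j1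
  have hsplit : (∫ t in Set.Ioi (0:ℝ), f t * gammaKernel x b t)
      - f x - x * b / 2 * deriv (deriv f) x
      = ∫ t in Set.Ioi (0:ℝ), g t * gammaKernel x b t := by
    have e : (fun t : ℝ => f t * gammaKernel x b t) = fun t =>
        g t * gammaKernel x b t + f x * gammaKernel x b t
        + deriv f x * ((t - x) * gammaKernel x b t)
        + deriv (deriv f) x / 2 * ((t - x) ^ 2 * gammaKernel x b t) := by
      funext t; simp only [hg]; ring
    rw [e, integral_add s2 j2, integral_add s1 j1, integral_add hig j0,
      integral_const_mul, integral_const_mul, integral_const_mul,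
      cmom0 x b hx hb, cmom1 x b hx hb, cmom2 x b hx hb]
    ring
  -- pointwise bound on the remainder
  have hpt : ∀ t ∈ Set.Ioi (0:ℝ), ‖g t * gammaKernel x b t‖
      ≤ ε1 * ((t - x) ^ 2 * gammaKernel x b t) + q * ((t - x) ^ 4 * gammaKernel x b t) := by
    intro t ht
    rw [Real.norm_eq_abs, abs_mul, abs_of_nonneg (hKnn t ht)]
    have hgt : |g t| ≤ ε1 * (t - x) ^ 2 + q * (t - x) ^ 4 := by
      rcases lt_or_ge (|t - x|) δ with hcase | hcase
      · have h1 : |g t| ≤ ε1 * (t - x) ^ 2 := by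
          apply quad_bound f x t ε1 hx ht hdf hdf'
          intro s hs
          have hd : dist s x < δ := by
            rw [Real.dist_eq]; exact lt_of_le_of_lt (abs_sub_le_of_uIcc hs) hcase
          have := hδ hd
          rw [Real.dist_eq] at this
          exact this.le
        have h2 : 0 ≤ q * (t - x) ^ 4 := by positivity
        linarith
      · have h1 : |g t| ≤ C2 * (t - x) ^ 2 := hgb t ht
        have hδ2 : δ ^ 2 ≤ (t - x) ^ 2 := by
          calc δ ^ 2 ≤ |t - x| ^ 2 := pow_le_pow_left₀ hδ0.le hcase 2
            _ = (t - x) ^ 2 := sq_abs _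
        have h2 : C2 * (t - x) ^ 2 ≤ q * (t - x) ^ 4 := by
          rw [hqdef, div_mul_eq_mul_div, le_div_iff₀ (by positivity)]
          nlinarith [mul_le_mul_of_nonneg_left hδ2 (mul_nonneg hC2pos.le (sq_nonneg (t - x)))]
        have h3 : 0 ≤ ε1 * (t - x) ^ 2 := by positivity
        linarith
    calc |g t| * gammaKernel x b t
        ≤ (ε1 * (t - x) ^ 2 + q * (t - x) ^ 4) * gammaKernel x b t :=
          mul_le_mul_of_nonneg_right hgt (hKnn t ht)
      _ = _ := by ring
  -- integral bound
  have hBint : MeasureTheory.IntegrableOn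
      (fun t : ℝ => ε1 * ((t - x) ^ 2 * gammaKernel x b t)
        + q * ((t - x) ^ 4 * gammaKernel x b t)) (Set.Ioi (0:ℝ)) :=
    ((cint2 x b hx hb).const_mul _).add ((cint4 x b hx hb).const_mul _)
  have hintb : |∫ t in Set.Ioi (0:ℝ), g t * gammaKernel x b t|
      ≤ ε1 * (x * b) + q * (3*x^2*b^2 + 6*x*b^3) := by
    have h1 := norm_integral_le_of_norm_le hBint (by
      rw [ae_restrict_iff' measurableSet_Ioi]
      exact Filter.Eventually.of_forall hpt)
    rw [Real.norm_eq_abs, integral_add ((cint2 x b hx hb).const_mul _)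
        ((cint4 x b hx hb).const_mul _), integral_const_mul, integral_const_mul,
      cmom2 x b hx hb, cmom4 x b hx hb] at h1
    exact h1
  -- conclude
  rw [Real.dist_eq, sub_zero]
  rw [hsplit, abs_div, abs_of_pos hb]
  have key : |∫ t in Set.Ioi (0:ℝ), g t * gammaKernel x b t| / b
      ≤ ε1 * x + q * (3*x^2*b + 6*x*b^2) := by
    rw [div_le_iff₀ hb]
    calc |∫ t in Set.Ioi (0:ℝ), g t * gammaKernel x b t|
        ≤ ε1 * (x * b) + q * (3*x^2*b^2 + 6*x*b^3) := hintb
      _ = (ε1 * x + q * (3*x^2*b + 6*x*b^2)) * b := by ring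
  have t1 : ε1 * x < ε / 2 := by
    rw [hε1def, div_mul_eq_mul_div, div_lt_div_iff₀ (by linarith) (by norm_num)]
    nlinarith
  have t2 : q * (3*x^2*b + 6*x*b^2) ≤ A * b := by
    rw [hAdef]
    nlinarith [mul_nonneg hq (mul_nonneg (mul_nonneg (by norm_num : (0:ℝ) ≤ 6) hx.le)
      (mul_nonneg hb.le (by linarith : (0:ℝ) ≤ 1 - b)))]
  have t3 : A * b < ε / 2 := by
    rw [lt_div_iff₀ (by linarith : (0:ℝ) < 2 * (A + 1))] at hb2
    nlinarith [mul_nonneg hA hb.le]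
  calc |∫ t in Set.Ioi (0:ℝ), g t * gammaKernel x b t| / b
      ≤ ε1 * x + q * (3*x^2*b + 6*x*b^2) := key
    _ ≤ ε1 * x + A * b := by linarith
    _ < ε / 2 + ε / 2 := by linarith
    _ = ε := by ring
end

section
/- (Davydov's inequality) Let X, Y be real random variables measurable with respect to σ-fields 𝒜, ℬ respectively, with ‖X‖_q < ∞ and ‖Y‖_p < ∞ where 1/p + 1/q + 1/r = 1, 1 ≤ p,q,r ≤ ∞. Then |Cov(X,Y)| ≤ 2π α(𝒜,ℬ)^{1/r} ‖X‖_q ‖Y‖_p, where α(𝒜,ℬ) = sup{|P(A∩B) − P(A)P(B)| : A ∈ 𝒜, B ∈ ℬ} is the strong mixing coefficient. -/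
open Real MeasureTheory Filter
open scoped ENNReal

/-- Covariance of two real random variables with respect to a measure `μ`. -/
noncomputable def cov' {Ω : Type*} {m0 : MeasurableSpace Ω} (μ : Measure Ω)
    (f g : Ω → ℝ) : ℝ :=
  ∫ ω, (f ω - ∫ ω', f ω' ∂μ) * (g ω - ∫ ω', g ω' ∂μ) ∂μ

/-- The strong mixing coefficient between two sub-σ-fields. -/
noncomputable def alphaMix {Ω : Type*} {m0 : MeasurableSpace Ω} (μ : Measure Ω)
    (m₁ m₂ : MeasurableSpace Ω) : ℝ :=
  sSup {r : ℝ | ∃ A B : Set Ω, MeasurableSet[m₁] A ∧ MeasurableSet[m₂] B ∧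
    r = |(μ (A ∩ B)).toReal - (μ A).toReal * (μ B).toReal|}


set_option linter.unusedSectionVars false
set_option linter.unusedVariables false

section Aux

variable {Ω : Type*} {m0 : MeasurableSpace Ω} {μ : Measure Ω} [IsProbabilityMeasure μ]
  {m₁ m₂ : MeasurableSpace Ω}

lemma ofReal_norm_eq_coe_nnnorm (a : ℝ) : ENNReal.ofReal ‖a‖ = (‖a‖₊ : ℝ≥0∞) :=
  ofReal_norm a

lemma toReal_prob_le_one {A : Set Ω} : (μ A).toReal ≤ 1 := by
  have := prob_le_one (μ := μ) (s := A)
  simpa using ENNReal.toReal_mono (by simp) this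

lemma alphaMix_nonneg : 0 ≤ alphaMix μ m₁ m₂ := by
  have h0 : (0:ℝ) ∈ {r : ℝ | ∃ A B : Set Ω, MeasurableSet[m₁] A ∧ MeasurableSet[m₂] B ∧
      r = |(μ (A ∩ B)).toReal - (μ A).toReal * (μ B).toReal|} := by
    refine ⟨∅, ∅, @MeasurableSet.empty _ m₁, @MeasurableSet.empty _ m₂, ?_⟩
    simp
  refine le_csSup ?_ h0
  refine ⟨1, fun x hx => ?_⟩
  obtain ⟨A, B, -, -, rfl⟩ := hx
  have h1 : (μ (A ∩ B)).toReal ≤ 1 := toReal_prob_le_one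
  have h2 : (μ A).toReal ≤ 1 := toReal_prob_le_one
  have h3 : (μ B).toReal ≤ 1 := toReal_prob_le_one
  have h4 : 0 ≤ (μ (A ∩ B)).toReal := ENNReal.toReal_nonneg
  have h5 : 0 ≤ (μ A).toReal := ENNReal.toReal_nonneg
  have h6 : 0 ≤ (μ B).toReal := ENNReal.toReal_nonneg
  rw [abs_le]
  constructor <;> nlinarith

lemma abs_le_alphaMix {A B : Set Ω} (hA : MeasurableSet[m₁] A) (hB : MeasurableSet[m₂] B) :
    |(μ (A ∩ B)).toReal - (μ A).toReal * (μ B).toReal| ≤ alphaMix μ m₁ m₂ := by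
  refine le_csSup ?_ ⟨A, B, hA, hB, rfl⟩
  refine ⟨1, fun x hx => ?_⟩
  obtain ⟨A, B, -, -, rfl⟩ := hx
  have h1 : (μ (A ∩ B)).toReal ≤ 1 := toReal_prob_le_one
  have h2 : (μ A).toReal ≤ 1 := toReal_prob_le_one
  have h3 : (μ B).toReal ≤ 1 := toReal_prob_le_one
  have h4 : 0 ≤ (μ (A ∩ B)).toReal := ENNReal.toReal_nonneg
  have h5 : 0 ≤ (μ A).toReal := ENNReal.toReal_nonneg
  have h6 : 0 ≤ (μ B).toReal := ENNReal.toReal_nonneg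
  rw [abs_le]
  constructor <;> nlinarith

lemma cov'_eq {f g : Ω → ℝ} (hf : Integrable f μ) (hg : Integrable g μ)
    (hfg : Integrable (fun ω => f ω * g ω) μ) :
    cov' μ f g = (∫ ω, f ω * g ω ∂μ) - (∫ ω, f ω ∂μ) * ∫ ω, g ω ∂μ := by
  set c := ∫ ω', f ω' ∂μ with hc
  set d := ∫ ω', g ω' ∂μ with hd
  have hexp : (fun ω => (f ω - c) * (g ω - d))
      = fun ω => f ω * g ω - (c * g ω + d * f ω - c * d) := by
    funext ω; ring
  have hinner : Integrable (fun ω => c * g ω + d * f ω - c * d) μ :=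
    ((hg.const_mul c).add (hf.const_mul d)).sub (integrable_const _)
  have hsum : Integrable (fun ω => c * g ω + d * f ω) μ :=
    (hg.const_mul c).add (hf.const_mul d)
  rw [cov']
  rw [show (∫ ω, (f ω - ∫ ω', f ω' ∂μ) * (g ω - ∫ ω', g ω' ∂μ) ∂μ)
      = ∫ ω, (f ω - c) * (g ω - d) ∂μ from rfl]
  rw [hexp, integral_sub hfg hinner,
    integral_sub hsum (integrable_const _),
    integral_add (hg.const_mul c) (hf.const_mul d),
    integral_const_mul, integral_const_mul, integral_const]
  simp [measure_univ]
  ring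

/-- `∫|f| ≤ ‖f‖_e` on a probability space for `e ≥ 1`. -/
lemma int_abs_le_eLpNorm {f : Ω → ℝ} {e : ℝ≥0∞} (hf : MemLp f e μ) (he : 1 ≤ e) :
    ∫ ω, |f ω| ∂μ ≤ (eLpNorm f e μ).toReal := by
  have hfi : Integrable f μ := hf.integrable he
  have h1 : ENNReal.ofReal (∫ ω, |f ω| ∂μ) = eLpNorm f 1 μ := by
    rw [eLpNorm_one_eq_lintegral_enorm, ← ofReal_integral_norm_eq_lintegral_enorm hfi]
    simp [Real.norm_eq_abs]
  have h2 : eLpNorm f 1 μ ≤ eLpNorm f e μ :=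
    eLpNorm_le_eLpNorm_of_exponent_le he hf.aestronglyMeasurable
  have h3 : (eLpNorm f 1 μ).toReal ≤ (eLpNorm f e μ).toReal :=
    ENNReal.toReal_mono hf.eLpNorm_ne_top h2
  calc ∫ ω, |f ω| ∂μ = (ENNReal.ofReal (∫ ω, |f ω| ∂μ)).toReal := by
        rw [ENNReal.toReal_ofReal (integral_nonneg fun ω => abs_nonneg _)]
    _ = (eLpNorm f 1 μ).toReal := by rw [h1]
    _ ≤ _ := h3

lemma abs_int_le_eLpNorm {f : Ω → ℝ} {e : ℝ≥0∞} (hf : MemLp f e μ) (he : 1 ≤ e) :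
    |∫ ω, f ω ∂μ| ≤ (eLpNorm f e μ).toReal :=
  le_trans (by simpa [Real.norm_eq_abs] using norm_integral_le_integral_norm (μ := μ) f) (int_abs_le_eLpNorm hf he)

/-- Hölder: integrability of the product and the integral inequality. -/
lemma holder_integrable {f g : Ω → ℝ} {e₁ e₂ : ℝ≥0∞} (he : 1 / e₁ + 1 / e₂ = 1)
    (hf : MemLp f e₁ μ) (hg : MemLp g e₂ μ) :
    Integrable (fun ω => f ω * g ω) μ := by
  have key : eLpNorm (fun ω => f ω * g ω) 1 μ ≤ eLpNorm f e₁ μ * eLpNorm g e₂ μ := by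
    haveI : ENNReal.HolderTriple e₁ e₂ 1 := ⟨by simpa [one_div] using he⟩
    simpa using eLpNorm_le_eLpNorm_mul_eLpNorm'_of_norm hf.aestronglyMeasurable
      hg.aestronglyMeasurable (· * ·) 1
      (Eventually.of_forall fun ω => by simp [abs_mul, Real.norm_eq_abs])
  rw [← memLp_one_iff_integrable]
  exact ⟨hf.aestronglyMeasurable.mul hg.aestronglyMeasurable,
    lt_of_le_of_lt key (ENNReal.mul_lt_top hf.eLpNorm_lt_top hg.eLpNorm_lt_top)⟩

lemma holder_abs_int_le {f g : Ω → ℝ} {e₁ e₂ : ℝ≥0∞} (he : 1 / e₁ + 1 / e₂ = 1)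
    (hf : MemLp f e₁ μ) (hg : MemLp g e₂ μ) :
    |∫ ω, f ω * g ω ∂μ| ≤ (eLpNorm f e₁ μ).toReal * (eLpNorm g e₂ μ).toReal := by
  have key : eLpNorm (fun ω => f ω * g ω) 1 μ ≤ eLpNorm f e₁ μ * eLpNorm g e₂ μ := by
    haveI : ENNReal.HolderTriple e₁ e₂ 1 := ⟨by simpa [one_div] using he⟩
    simpa using eLpNorm_le_eLpNorm_mul_eLpNorm'_of_norm hf.aestronglyMeasurable
      hg.aestronglyMeasurable (· * ·) 1
      (Eventually.of_forall fun ω => by simp [abs_mul, Real.norm_eq_abs])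
  have h1 : (1:ℝ≥0∞) ≤ 1 := le_refl _
  have hint := holder_integrable he hf hg
  calc |∫ ω, f ω * g ω ∂μ| ≤ (eLpNorm (fun ω => f ω * g ω) 1 μ).toReal :=
        abs_int_le_eLpNorm (memLp_one_iff_integrable.mpr hint) h1
    _ ≤ ((eLpNorm f e₁ μ) * (eLpNorm g e₂ μ)).toReal := by
        refine ENNReal.toReal_mono ?_ key
        exact (ENNReal.mul_lt_top hf.eLpNorm_lt_top hg.eLpNorm_lt_top).ne
    _ = _ := ENNReal.toReal_mul

end Aux

section Sign

variable {Ω : Type*} {m0 : MeasurableSpace Ω} {μ : Measure Ω} [IsProbabilityMeasure μ]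
  {m₁ m₂ : MeasurableSpace Ω}

/-- The ±1-valued function attached to a set. -/
noncomputable def dvSign (A : Set Ω) : Ω → ℝ :=
  fun ω => A.indicator (fun _ => (2:ℝ)) ω - 1

lemma dvSign_mem {A : Set Ω} {ω : Ω} (h : ω ∈ A) : dvSign A ω = 1 := by
  simp [dvSign, h]; try norm_num

lemma dvSign_not_mem {A : Set Ω} {ω : Ω} (h : ω ∉ A) : dvSign A ω = -1 := by
  simp [dvSign, h]; try norm_num

lemma dvSign_abs {A : Set Ω} (ω : Ω) : |dvSign A ω| = 1 := by
  by_cases h : ω ∈ A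
  · rw [dvSign_mem h]; norm_num
  · rw [dvSign_not_mem h]; norm_num

lemma dvSign_measurable {m : MeasurableSpace Ω} {A : Set Ω} (hA : MeasurableSet[m] A) :
    Measurable[m] (dvSign A) :=
  (measurable_const.indicator hA).sub measurable_const

lemma dvSign_integrable {m : MeasurableSpace Ω} (hm : m ≤ m0) {A : Set Ω}
    (hA : MeasurableSet[m] A) : Integrable (dvSign A) μ := by
  refine (integrable_const (1:ℝ)).mono'
    (((dvSign_measurable hA).mono hm le_rfl).aestronglyMeasurable) ?_
  exact Eventually.of_forall fun ω => by rw [Real.norm_eq_abs, dvSign_abs]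

lemma int_dvSign {A : Set Ω} (hA : MeasurableSet[m0] A) :
    ∫ ω, dvSign A ω ∂μ = 2 * (μ A).toReal - 1 := by
  simp only [dvSign]
  rw [integral_sub ((integrable_const (2:ℝ)).indicator hA) (integrable_const 1),
    integral_indicator_const (2:ℝ) hA, integral_const]
  simp [measure_univ, measureReal_def]
  ring

lemma dvSign_mul_eq {A B : Set Ω} (ω : Ω) :
    dvSign A ω * dvSign B ω
      = 4 * (A ∩ B).indicator (fun _ => (1:ℝ)) ω - 2 * A.indicator (fun _ => (1:ℝ)) ω
        - 2 * B.indicator (fun _ => (1:ℝ)) ω + 1 := by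
  by_cases hA : ω ∈ A <;> by_cases hB : ω ∈ B <;>
    simp [dvSign, hA, hB, Set.indicator, Set.mem_inter_iff] <;> norm_num

lemma int_dvSign_mul {A B : Set Ω} (hA : MeasurableSet[m0] A) (hB : MeasurableSet[m0] B) :
    ∫ ω, dvSign A ω * dvSign B ω ∂μ
      = 4 * (μ (A ∩ B)).toReal - 2 * (μ A).toReal - 2 * (μ B).toReal + 1 := by
  have hAB : MeasurableSet[m0] (A ∩ B) := hA.inter hB
  have i1 : Integrable ((A ∩ B).indicator (fun _ => (1:ℝ))) μ :=
    (integrable_const (1:ℝ)).indicator hAB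
  have i2 : Integrable (A.indicator (fun _ => (1:ℝ))) μ :=
    (integrable_const (1:ℝ)).indicator hA
  have i3 : Integrable (B.indicator (fun _ => (1:ℝ))) μ :=
    (integrable_const (1:ℝ)).indicator hB
  have hpt : (fun ω => dvSign A ω * dvSign B ω)
      = fun ω => 4 * (A ∩ B).indicator (fun _ => (1:ℝ)) ω - 2 * A.indicator (fun _ => (1:ℝ)) ω
        - 2 * B.indicator (fun _ => (1:ℝ)) ω + 1 := funext dvSign_mul_eq
  rw [hpt]
  have h4 : Integrable (fun ω => 4 * (A ∩ B).indicator (fun _ => (1:ℝ)) ω) μ := i1.const_mul 4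
  have h5 : Integrable (fun ω => 2 * A.indicator (fun _ => (1:ℝ)) ω) μ := i2.const_mul 2
  have h6 : Integrable (fun ω => 2 * B.indicator (fun _ => (1:ℝ)) ω) μ := i3.const_mul 2
  have hsub1 : Integrable (fun ω => 4 * (A ∩ B).indicator (fun _ => (1:ℝ)) ω
      - 2 * A.indicator (fun _ => (1:ℝ)) ω) μ := h4.sub h5
  have hsub2 : Integrable (fun ω => 4 * (A ∩ B).indicator (fun _ => (1:ℝ)) ω
      - 2 * A.indicator (fun _ => (1:ℝ)) ω - 2 * B.indicator (fun _ => (1:ℝ)) ω) μ := hsub1.sub h6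
  rw [integral_add hsub2 (integrable_const 1),
    integral_sub hsub1 h6, integral_sub h4 h5,
    integral_const_mul, integral_const_mul, integral_const_mul,
    integral_indicator_const (1:ℝ) hAB, integral_indicator_const (1:ℝ) hA,
    integral_indicator_const (1:ℝ) hB, integral_const]
  simp [measure_univ, measureReal_def]

lemma dvSign_cov_le (hm₁ : m₁ ≤ m0) (hm₂ : m₂ ≤ m0) {A B : Set Ω}
    (hA : MeasurableSet[m₁] A) (hB : MeasurableSet[m₂] B) :
    |∫ ω, dvSign A ω * dvSign B ω ∂μ - (∫ ω, dvSign A ω ∂μ) * ∫ ω, dvSign B ω ∂μ|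
      ≤ 4 * alphaMix μ m₁ m₂ := by
  rw [int_dvSign_mul (hm₁ A hA) (hm₂ B hB), int_dvSign (hm₁ A hA), int_dvSign (hm₂ B hB)]
  have heq : 4 * (μ (A ∩ B)).toReal - 2 * (μ A).toReal - 2 * (μ B).toReal + 1
      - (2 * (μ A).toReal - 1) * (2 * (μ B).toReal - 1)
      = 4 * ((μ (A ∩ B)).toReal - (μ A).toReal * (μ B).toReal) := by ring
  rw [heq, abs_mul, abs_of_nonneg (by norm_num : (0:ℝ) ≤ 4)]
  have := abs_le_alphaMix (μ := μ) hA hB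
  linarith

end Sign

section CondexpBounds

variable {Ω : Type*} {m0 : MeasurableSpace Ω} {μ : Measure Ω} [IsProbabilityMeasure μ]
  {m₁ m₂ : MeasurableSpace Ω}

/-- Key covariance bound between a bounded `m₂`-measurable function and a `±1`-valued
`m₁`-measurable sign function. -/
lemma cov_dvSign_le (hm₁ : m₁ ≤ m0) (hm₂ : m₂ ≤ m0) {g : Ω → ℝ}
    (hg : Measurable[m₂] g) (hgi : Integrable g μ)
    {N : ℝ} (hgb : ∀ᵐ ω ∂μ, |g ω| ≤ N) {A : Set Ω} (hA : MeasurableSet[m₁] A) :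
    |∫ ω, g ω * dvSign A ω ∂μ - (∫ ω, g ω ∂μ) * ∫ ω, dvSign A ω ∂μ|
      ≤ 4 * alphaMix μ m₁ m₂ * N := by
  set ε := dvSign A with hε
  have hεm : Measurable[m₁] ε := dvSign_measurable hA
  have hεm0 : Measurable[m0] ε := hεm.mono hm₁ le_rfl
  have hεi : Integrable ε μ := dvSign_integrable hm₁ hA
  have hgm0 : Measurable[m0] g := hg.mono hm₂ le_rfl
  have hgε : Integrable (g * ε) μ := by
    refine hgi.abs.mono' (hgm0.aestronglyMeasurable.mul hεm0.aestronglyMeasurable) ?_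
    exact Eventually.of_forall fun ω => by
      simp only [Pi.mul_apply, Real.norm_eq_abs, abs_mul, hε, dvSign_abs, mul_one, le_refl]
  -- conditional expectation of ε on m₂
  set ce := μ[ε|m₂] with hce
  have hce_bd : ∀ᵐ ω ∂μ, |ce ω| ≤ 1 := by
    have h1 : ∀ᵐ ω ∂μ, |ε ω| ≤ ((1:NNReal):ℝ) := by
      refine Eventually.of_forall fun ω => ?_
      rw [hε, dvSign_abs]
      norm_num
    simpa using ae_bdd_condExp_of_ae_bdd (m := m₂) h1
  have hcei : Integrable ce μ := integrable_condExp
  have hpull : ∫ ω, g ω * ε ω ∂μ = ∫ ω, g ω * ce ω ∂μ := by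
    have h1 : μ[g * ε|m₂] =ᵐ[μ] g * ce :=
      condExp_mul_of_stronglyMeasurable_left hg.stronglyMeasurable hgε hεi
    have h2 : ∫ ω, (g * ε) ω ∂μ = ∫ ω, (μ[g * ε|m₂]) ω ∂μ := (integral_condExp hm₂ (f := g * ε)).symm
    calc ∫ ω, g ω * ε ω ∂μ = ∫ ω, (g * ε) ω ∂μ := rfl
      _ = ∫ ω, (μ[g * ε|m₂]) ω ∂μ := h2
      _ = ∫ ω, (g * ce) ω ∂μ := integral_congr_ae h1
      _ = ∫ ω, g ω * ce ω ∂μ := rfl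
  set c := ∫ ω, ε ω ∂μ with hc
  set ξ := fun ω => ce ω - c with hξ
  have hξi : Integrable ξ μ := hcei.sub (integrable_const c)
  have hgce : Integrable (fun ω => g ω * ce ω) μ := by
    refine hgi.abs.mono' (hgm0.aestronglyMeasurable.mul
      (stronglyMeasurable_condExp.mono hm₂).aestronglyMeasurable) ?_
    filter_upwards [hce_bd] with ω hω
    rw [Real.norm_eq_abs, abs_mul]
    calc |g ω| * |ce ω| ≤ |g ω| * 1 := by
          exact mul_le_mul_of_nonneg_left hω (abs_nonneg _)
      _ = |g ω| := mul_one _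
  have key1 : ∫ ω, g ω * ε ω ∂μ - (∫ ω, g ω ∂μ) * c = ∫ ω, g ω * ξ ω ∂μ := by
    have hexp : (fun ω => g ω * ξ ω) = fun ω => g ω * ce ω - g ω * c := by
      funext ω; simp only [hξ]; ring
    rw [hexp, integral_sub hgce (hgi.mul_const c), integral_mul_const, hpull]
  -- the sign of ξ
  have hξm : StronglyMeasurable[m₂] ξ :=
    stronglyMeasurable_condExp.sub stronglyMeasurable_const
  set B := ξ ⁻¹' (Set.Ici 0) with hB
  have hBm : MeasurableSet[m₂] B := hξm.measurable measurableSet_Ici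
  set δ := dvSign B with hδ
  have hδm0 : Measurable[m0] δ := (dvSign_measurable hBm).mono hm₂ le_rfl
  have habs : ∀ ω, |ξ ω| = ξ ω * δ ω := by
    intro ω
    by_cases h : ω ∈ B
    · rw [hδ, dvSign_mem h, mul_one]
      exact abs_of_nonneg (by simpa [hB, Set.mem_preimage] using h)
    · rw [hδ, dvSign_not_mem h]
      have : ξ ω < 0 := by
        by_contra hcon
        exact h (by simpa [hB, Set.mem_preimage] using not_lt.mp hcon)
      rw [abs_of_neg this]; ring
  have hδi : Integrable δ μ := dvSign_integrable hm₂ hBm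
  have hδε : Integrable (δ * ε) μ := by
    refine hεi.abs.mono' (hδm0.aestronglyMeasurable.mul hεm0.aestronglyMeasurable) ?_
    exact Eventually.of_forall fun ω => by
      simp only [Pi.mul_apply, Real.norm_eq_abs, abs_mul, hδ, dvSign_abs, one_mul, le_refl]
  have hδce : Integrable (fun ω => δ ω * ce ω) μ := by
    refine hcei.abs.mono' (hδm0.aestronglyMeasurable.mul
      (stronglyMeasurable_condExp.mono hm₂).aestronglyMeasurable) ?_
    exact Eventually.of_forall fun ω => by
      rw [Real.norm_eq_abs, abs_mul, hδ, dvSign_abs, one_mul]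
  have hpull2 : ∫ ω, δ ω * ε ω ∂μ = ∫ ω, δ ω * ce ω ∂μ := by
    have h1 : μ[δ * ε|m₂] =ᵐ[μ] δ * ce :=
      condExp_mul_of_stronglyMeasurable_left (dvSign_measurable hBm).stronglyMeasurable hδε hεi
    have h2 : ∫ ω, (δ * ε) ω ∂μ = ∫ ω, (μ[δ * ε|m₂]) ω ∂μ := (integral_condExp hm₂ (f := δ * ε)).symm
    calc ∫ ω, δ ω * ε ω ∂μ = ∫ ω, (δ * ε) ω ∂μ := rfl
      _ = ∫ ω, (μ[δ * ε|m₂]) ω ∂μ := h2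
      _ = ∫ ω, (δ * ce) ω ∂μ := integral_congr_ae h1
      _ = ∫ ω, δ ω * ce ω ∂μ := rfl
  have key2 : ∫ ω, |ξ ω| ∂μ = ∫ ω, ε ω * δ ω ∂μ - (∫ ω, ε ω ∂μ) * ∫ ω, δ ω ∂μ := by
    have hexp : (fun ω => |ξ ω|) = fun ω => ce ω * δ ω - c * δ ω := by
      funext ω; rw [habs ω, hξ]; ring
    have hconv : (fun ω => ce ω * δ ω) = fun ω => δ ω * ce ω := by
      funext ω; ring
    rw [hexp, integral_sub (by rw [hconv]; exact hδce) (hδi.const_mul c), hconv,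
      ← hpull2, integral_const_mul]
    have hconv2 : (fun ω => δ ω * ε ω) = fun ω => ε ω * δ ω := by
      funext ω; ring
    rw [hconv2, hc]
  -- putting it together
  have hcov : |∫ ω, ε ω * δ ω ∂μ - (∫ ω, ε ω ∂μ) * ∫ ω, δ ω ∂μ| ≤ 4 * alphaMix μ m₁ m₂ :=
    dvSign_cov_le hm₁ hm₂ hA hBm
  have hN : 0 ≤ N := by
    rcases hgb.exists with ⟨ω, hω⟩
    exact le_trans (abs_nonneg _) hω
  have step1 : |∫ ω, g ω * ξ ω ∂μ| ≤ N * ∫ ω, |ξ ω| ∂μ := by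
    have h1 : |∫ ω, g ω * ξ ω ∂μ| ≤ ∫ ω, |g ω * ξ ω| ∂μ := by
      have := norm_integral_le_integral_norm (μ := μ) (fun ω => g ω * ξ ω)
      simpa only [Real.norm_eq_abs] using this
    have hgξi : Integrable (fun ω => |g ω * ξ ω|) μ := by
      refine (hξi.abs.const_mul N).mono'
        ((hgm0.aestronglyMeasurable.mul hξi.aestronglyMeasurable).norm) ?_
      filter_upwards [hgb] with ω hω
      rw [Real.norm_eq_abs, abs_abs, abs_mul]
      exact mul_le_mul_of_nonneg_right hω (abs_nonneg _)
    have h2 : ∫ ω, |g ω * ξ ω| ∂μ ≤ ∫ ω, N * |ξ ω| ∂μ := by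
      refine integral_mono_ae hgξi (hξi.abs.const_mul N) ?_
      filter_upwards [hgb] with ω hω
      rw [abs_mul]
      exact mul_le_mul_of_nonneg_right hω (abs_nonneg _)
    rw [integral_const_mul] at h2
    linarith
  calc |∫ ω, g ω * dvSign A ω ∂μ - (∫ ω, g ω ∂μ) * ∫ ω, dvSign A ω ∂μ|
      = |∫ ω, g ω * ξ ω ∂μ| := by rw [← key1]
    _ ≤ N * ∫ ω, |ξ ω| ∂μ := step1
    _ ≤ N * (4 * alphaMix μ m₁ m₂) := by
        refine mul_le_mul_of_nonneg_left ?_ hN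
        rw [key2]
        exact le_trans (le_abs_self _) hcov
    _ = 4 * alphaMix μ m₁ m₂ * N := by ring

end CondexpBounds

section CenterL1

variable {Ω : Type*} {m0 : MeasurableSpace Ω} {μ : Measure Ω} [IsProbabilityMeasure μ]
  {m₁ m₂ : MeasurableSpace Ω}

/-- `‖E[g|m₁] - E g‖₁ ≤ 4 α N` for `g` an `m₂`-measurable function bounded by `N`. -/
lemma condexp_center_int_abs_le (hm₁ : m₁ ≤ m0) (hm₂ : m₂ ≤ m0) {g : Ω → ℝ}
    (hg : Measurable[m₂] g) (hgi : Integrable g μ)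
    {N : ℝ} (hgb : ∀ᵐ ω ∂μ, |g ω| ≤ N) :
    ∫ ω, abs ((μ[g|m₁]) ω - ∫ ω', g ω' ∂μ) ∂μ ≤ 4 * alphaMix μ m₁ m₂ * N := by
  set c := ∫ ω', g ω' ∂μ with hc
  set η := fun ω => (μ[g|m₁]) ω - c with hη
  have hηm : StronglyMeasurable[m₁] η :=
    stronglyMeasurable_condExp.sub stronglyMeasurable_const
  have hηi : Integrable η μ := integrable_condExp.sub (integrable_const c)
  set A := η ⁻¹' (Set.Ici 0) with hA
  have hAm : MeasurableSet[m₁] A := hηm.measurable measurableSet_Ici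
  set ε := dvSign A with hε
  have hεm : Measurable[m₁] ε := dvSign_measurable hAm
  have hεm0 : Measurable[m0] ε := hεm.mono hm₁ le_rfl
  have hεi : Integrable ε μ := dvSign_integrable hm₁ hAm
  have hgm0 : Measurable[m0] g := hg.mono hm₂ le_rfl
  have habs : ∀ ω, |η ω| = η ω * ε ω := by
    intro ω
    by_cases h : ω ∈ A
    · rw [hε, dvSign_mem h, mul_one]
      exact abs_of_nonneg (by simpa [hA, Set.mem_preimage] using h)
    · rw [hε, dvSign_not_mem h]
      have : η ω < 0 := by
        by_contra hcon
        exact h (by simpa [hA, Set.mem_preimage] using not_lt.mp hcon)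
      rw [abs_of_neg this]; ring
  -- integrability of products
  have hgε : Integrable (fun ω => ε ω * g ω) μ := by
    refine hgi.abs.mono' (hεm0.aestronglyMeasurable.mul hgm0.aestronglyMeasurable) ?_
    exact Eventually.of_forall fun ω => by
      rw [Real.norm_eq_abs, abs_mul, hε, dvSign_abs, one_mul]
  have hεce : Integrable (fun ω => ε ω * (μ[g|m₁]) ω) μ := by
    refine (integrable_condExp (f := g) (m := m₁)).abs.mono' (hεm0.aestronglyMeasurable.mul
      (stronglyMeasurable_condExp.mono hm₁).aestronglyMeasurable) ?_
    exact Eventually.of_forall fun ω => by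
      rw [Real.norm_eq_abs, abs_mul, hε, dvSign_abs, one_mul]
  have hpull : ∫ ω, ε ω * g ω ∂μ = ∫ ω, ε ω * (μ[g|m₁]) ω ∂μ := by
    have h1 : μ[ε * g|m₁] =ᵐ[μ] ε * μ[g|m₁] :=
      condExp_mul_of_stronglyMeasurable_left (dvSign_measurable hAm).stronglyMeasurable hgε hgi
    calc ∫ ω, ε ω * g ω ∂μ = ∫ ω, (ε * g) ω ∂μ := rfl
      _ = ∫ ω, (μ[ε * g|m₁]) ω ∂μ := (integral_condExp hm₁ (f := ε * g)).symm
      _ = ∫ ω, (ε * μ[g|m₁]) ω ∂μ := integral_congr_ae h1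
      _ = ∫ ω, ε ω * (μ[g|m₁]) ω ∂μ := rfl
  have key : ∫ ω, |η ω| ∂μ = ∫ ω, g ω * ε ω ∂μ - (∫ ω, g ω ∂μ) * ∫ ω, ε ω ∂μ := by
    have hexp : (fun ω => |η ω|) = fun ω => ε ω * (μ[g|m₁]) ω - c * ε ω := by
      funext ω; rw [habs ω, hη]; ring
    rw [hexp, integral_sub hεce (hεi.const_mul c), ← hpull, integral_const_mul]
    have hconv : (fun ω => ε ω * g ω) = fun ω => g ω * ε ω := by funext ω; ring
    rw [hconv, hc]
  rw [key]
  exact le_trans (le_abs_self _) (cov_dvSign_le hm₁ hm₂ hg hgi hgb hAm)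

end CenterL1

section Clamp

variable {Ω : Type*} {m0 : MeasurableSpace Ω} {μ : Measure Ω} [IsProbabilityMeasure μ]
  {m₁ m₂ : MeasurableSpace Ω}

/-- Clamp (truncate) a function to `[-N, N]`. -/
noncomputable def dvClamp (N : ℝ) (f : Ω → ℝ) : Ω → ℝ := fun ω => max (-N) (min (f ω) N)

lemma dvClamp_abs_le {N : ℝ} (hN : 0 ≤ N) (f : Ω → ℝ) (ω : Ω) : |dvClamp N f ω| ≤ N := by
  rw [abs_le, dvClamp]
  constructor
  · exact le_max_left _ _
  · exact max_le (by linarith) (min_le_right _ _)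

lemma dvClamp_measurable {m : MeasurableSpace Ω} {N : ℝ} {f : Ω → ℝ} (hf : Measurable[m] f) :
    Measurable[m] (dvClamp N f) :=
  Measurable.max measurable_const (Measurable.min hf measurable_const)

lemma dvClamp_eq_self {N : ℝ} {f : Ω → ℝ} {ω : Ω} (h : |f ω| ≤ N) : dvClamp N f ω = f ω := by
  rw [abs_le] at h
  rw [dvClamp, min_eq_left h.2, max_eq_right h.1]

lemma dvClamp_tail_abs_le {N : ℝ} (hN : 0 ≤ N) {f : Ω → ℝ} (ω : Ω) :
    |f ω - dvClamp N f ω| ≤ |f ω| := by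
  rcases le_total (f ω) N with h1 | h1
  · rcases le_total (-N) (f ω) with h2 | h2
    · rw [dvClamp_eq_self (abs_le.mpr ⟨h2, h1⟩)]
      simp [abs_nonneg]
    · rw [dvClamp, min_eq_left h1, max_eq_left h2]
      have hf0 : f ω ≤ 0 := le_trans h2 (by linarith)
      rw [abs_of_nonpos (by linarith : f ω - -N ≤ 0), abs_of_nonpos hf0]
      linarith
  · rw [dvClamp, min_eq_right h1, max_eq_right (by linarith : -N ≤ N)]
    have hf0 : 0 ≤ f ω := le_trans hN h1
    rw [abs_of_nonneg (by linarith : 0 ≤ f ω - N), abs_of_nonneg hf0]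
    linarith

/-- Pointwise tail bound: `|f - clamp|^c ≤ |f|^pr * N^(c - pr)` when `0 < c ≤ pr`, `0 < N`. -/
lemma dvClamp_tail_rpow_le {N c pr : ℝ} (hN : 0 < N) (hc : 0 < c) (hcp : c ≤ pr)
    {f : Ω → ℝ} (ω : Ω) :
    |f ω - dvClamp N f ω| ^ c ≤ |f ω| ^ pr * N ^ (c - pr) := by
  rcases le_or_gt (|f ω|) N with h | h
  · rw [dvClamp_eq_self h, sub_self, abs_zero, Real.zero_rpow hc.ne']
    positivity
  · have hfpos : 0 < |f ω| := lt_trans hN h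
    have h1 : |f ω - dvClamp N f ω| ^ c ≤ |f ω| ^ c :=
      Real.rpow_le_rpow (abs_nonneg _) (dvClamp_tail_abs_le hN.le ω) hc.le
    refine le_trans h1 ?_
    have hdiv : (1:ℝ) ≤ |f ω| / N := (one_le_div hN).mpr h.le
    have h2 : (|f ω| / N) ^ c ≤ (|f ω| / N) ^ pr :=
      Real.rpow_le_rpow_of_exponent_le hdiv hcp
    have h3 : |f ω| ^ c = (|f ω| / N) ^ c * N ^ c := by
      rw [Real.div_rpow (abs_nonneg _) hN.le]
      field_simp
    have h4 : (|f ω| / N) ^ pr * N ^ c = |f ω| ^ pr * N ^ (c - pr) := by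
      rw [Real.div_rpow (abs_nonneg _) hN.le, Real.rpow_sub hN]
      field_simp
      try ring
    rw [h3, ← h4]
    exact mul_le_mul_of_nonneg_right h2 (by positivity)

/-- `L^{q'}` bound for the truncation tail. -/
lemma tail_eLpNorm_le {pp q' : ℝ≥0∞} (hq'0 : q' ≠ 0) (hq't : q' ≠ ∞) (hpt : pp ≠ ∞)
    (hle : q'.toReal ≤ pp.toReal) (hp0 : 0 < pp.toReal) (hpp0 : pp ≠ 0)
    {Y : Ω → ℝ} (hY : MemLp Y pp μ) {N : ℝ} (hN : 0 < N) :
    eLpNorm (fun ω => Y ω - dvClamp N Y ω) q' μ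
      ≤ ENNReal.ofReal ((((eLpNorm Y pp μ).toReal) ^ pp.toReal * N ^ (q'.toReal - pp.toReal))
          ^ (1 / q'.toReal)) := by
  set c := q'.toReal with hcdef
  set pr := pp.toReal with hprdef
  have hc : 0 < c := ENNReal.toReal_pos hq'0 hq't
  set b := (eLpNorm Y pp μ).toReal with hb
  have hb0 : 0 ≤ b := ENNReal.toReal_nonneg
  rw [eLpNorm_eq_lintegral_rpow_enorm_toReal hq'0 hq't]
  simp_rw [enorm_eq_nnnorm]
  have hpoint : ∀ ω, ((‖Y ω - dvClamp N Y ω‖₊ : ℝ≥0∞)) ^ c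
      ≤ ENNReal.ofReal (|Y ω| ^ pr * N ^ (c - pr)) := by
    intro ω
    rw [← ofReal_norm_eq_coe_nnnorm, Real.norm_eq_abs,
      ENNReal.ofReal_rpow_of_nonneg (abs_nonneg _) hc.le]
    exact ENNReal.ofReal_le_ofReal (dvClamp_tail_rpow_le hN hc hle ω)
  have hlin : (∫⁻ ω, (‖Y ω - dvClamp N Y ω‖₊ : ℝ≥0∞) ^ c ∂μ)
      ≤ ∫⁻ ω, (‖Y ω‖₊ : ℝ≥0∞) ^ pr * ENNReal.ofReal (N ^ (c - pr)) ∂μ := by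
    refine lintegral_mono fun ω => ?_
    refine le_trans (hpoint ω) ?_
    rw [ENNReal.ofReal_mul (by positivity), ← ofReal_norm_eq_coe_nnnorm, Real.norm_eq_abs,
      ENNReal.ofReal_rpow_of_nonneg (abs_nonneg _) (by positivity : (0:ℝ) ≤ pr)]
  rw [lintegral_mul_const'' _ (f := fun ω => (‖Y ω‖₊ : ℝ≥0∞) ^ pr)
    (hY.aestronglyMeasurable.enorm.pow_const _)] at hlin
  have hp0' : pp ≠ 0 := hpp0
  have hYlint : (∫⁻ ω, (‖Y ω‖₊ : ℝ≥0∞) ^ pr ∂μ) = (eLpNorm Y pp μ) ^ pr := by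
    rw [eLpNorm_eq_lintegral_rpow_enorm_toReal hp0' hpt, ← ENNReal.rpow_mul, one_div,
      inv_mul_cancel₀ hp0.ne', ENNReal.rpow_one]
    rfl
  have heq : (eLpNorm Y pp μ) ^ pr = ENNReal.ofReal (b ^ pr) := by
    rw [hb, ← ENNReal.ofReal_rpow_of_nonneg ENNReal.toReal_nonneg hp0.le,
      ENNReal.ofReal_toReal hY.eLpNorm_ne_top]
  have hfin : (∫⁻ ω, (‖Y ω - dvClamp N Y ω‖₊ : ℝ≥0∞) ^ c ∂μ)
      ≤ ENNReal.ofReal (b ^ pr * N ^ (c - pr)) := by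
    refine le_trans hlin ?_
    rw [hYlint, heq, ← ENNReal.ofReal_mul (by positivity)]
  calc (∫⁻ ω, (‖Y ω - dvClamp N Y ω‖₊ : ℝ≥0∞) ^ c ∂μ) ^ (1 / c)
      ≤ (ENNReal.ofReal (b ^ pr * N ^ (c - pr))) ^ (1 / c) :=
        ENNReal.rpow_le_rpow hfin (by positivity)
    _ = ENNReal.ofReal ((b ^ pr * N ^ (c - pr)) ^ (1 / c)) := by
        rw [ENNReal.ofReal_rpow_of_nonneg (by positivity) (by positivity)]

end Clamp

section MainEstimates

variable {Ω : Type*} {m0 : MeasurableSpace Ω} {μ : Measure Ω} [IsProbabilityMeasure μ]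
  {m₁ m₂ : MeasurableSpace Ω}

/-- Interpolation: `‖η‖_{q'} ≤ (M^(c-1) L)^(1/c)` if `‖η‖₁ ≤ L` and `|η| ≤ M` a.e. -/
lemma eLpNorm_interp_le {η : Ω → ℝ} (hηi : Integrable η μ)
    {q' : ℝ≥0∞} (hq'0 : q' ≠ 0) (hq't : q' ≠ ∞) (hc1 : 1 ≤ q'.toReal)
    {L M : ℝ} (hL0 : 0 ≤ L) (hM0 : 0 ≤ M)
    (hL : ∫ ω, |η ω| ∂μ ≤ L) (hM : ∀ᵐ ω ∂μ, |η ω| ≤ M) :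
    eLpNorm η q' μ ≤ ENNReal.ofReal ((M ^ (q'.toReal - 1) * L) ^ (1 / q'.toReal)) := by
  set c := q'.toReal with hcdef
  have hc : 0 < c := lt_of_lt_of_le one_pos hc1
  rw [eLpNorm_eq_lintegral_rpow_enorm_toReal hq'0 hq't]
  simp_rw [enorm_eq_nnnorm]
  have hpoint : ∀ᵐ ω ∂μ, (‖η ω‖₊ : ℝ≥0∞) ^ c
      ≤ ENNReal.ofReal (M ^ (c - 1)) * (‖η ω‖₊ : ℝ≥0∞) := by
    filter_upwards [hM] with ω hω
    rw [← ofReal_norm_eq_coe_nnnorm, Real.norm_eq_abs,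
      ENNReal.ofReal_rpow_of_nonneg (abs_nonneg _) hc.le, ← ENNReal.ofReal_mul (by positivity)]
    refine ENNReal.ofReal_le_ofReal ?_
    by_cases hz : η ω = 0
    · rw [hz, abs_zero, Real.zero_rpow hc.ne']
      positivity
    · have habs : (0:ℝ) < |η ω| := abs_pos.mpr hz
      calc |η ω| ^ c = |η ω| ^ ((c - 1) + 1) := by norm_num
        _ = |η ω| ^ (c - 1) * |η ω| := Real.rpow_add_one (ne_of_gt habs) _
        _ ≤ M ^ (c - 1) * |η ω| := by
            refine mul_le_mul_of_nonneg_right ?_ (abs_nonneg _)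
            exact Real.rpow_le_rpow (abs_nonneg _) hω (by linarith)
  have hlin : (∫⁻ ω, (‖η ω‖₊ : ℝ≥0∞) ^ c ∂μ)
      ≤ ENNReal.ofReal (M ^ (c - 1)) * ∫⁻ ω, (‖η ω‖₊ : ℝ≥0∞) ∂μ := by
    refine le_trans (lintegral_mono_ae hpoint) ?_
    rw [lintegral_const_mul' _ _ ENNReal.ofReal_ne_top]
  have hL1 : (∫⁻ ω, (‖η ω‖₊ : ℝ≥0∞) ∂μ) ≤ ENNReal.ofReal L := by
    simp_rw [← enorm_eq_nnnorm]
    rw [← ofReal_integral_norm_eq_lintegral_enorm hηi]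
    refine ENNReal.ofReal_le_ofReal ?_
    simpa [Real.norm_eq_abs] using hL
  have hfin : (∫⁻ ω, (‖η ω‖₊ : ℝ≥0∞) ^ c ∂μ) ≤ ENNReal.ofReal (M ^ (c - 1) * L) := by
    refine le_trans hlin ?_
    rw [ENNReal.ofReal_mul (by positivity)]
    gcongr
  calc (∫⁻ ω, (‖η ω‖₊ : ℝ≥0∞) ^ c ∂μ) ^ (1 / c)
      ≤ (ENNReal.ofReal (M ^ (c - 1) * L)) ^ (1 / c) :=
        ENNReal.rpow_le_rpow hfin (by positivity)
    _ = ENNReal.ofReal ((M ^ (c - 1) * L) ^ (1 / c)) := by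
        rw [ENNReal.ofReal_rpow_of_nonneg (by positivity) (by positivity)]

/-- Main estimate: covariance of `X` with the clamped `Y`. -/
lemma cov_clamp_le (hm₁ : m₁ ≤ m0) (hm₂ : m₂ ≤ m0) {X Y : Ω → ℝ}
    (hX : Measurable[m₁] X) (hY : Measurable[m₂] Y)
    {qq q' : ℝ≥0∞} (hqq1 : 1 ≤ qq) (hq'1 : 1 ≤ q') (hq't : q' ≠ ∞)
    (hconj : 1 / qq + 1 / q' = 1)
    (hXq : MemLp X qq μ) (hYi : Integrable Y μ) {N : ℝ} (hN : 0 < N) :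
    |cov' μ X (dvClamp N Y)| ≤ (eLpNorm X qq μ).toReal *
      ((2 * N) ^ (q'.toReal - 1) * (4 * alphaMix μ m₁ m₂ * N)) ^ (1 / q'.toReal) := by
  have hα0 : 0 ≤ alphaMix μ m₁ m₂ := alphaMix_nonneg
  set Y₁ := dvClamp N Y with hY₁def
  have hY₁m : Measurable[m₂] Y₁ := dvClamp_measurable hY
  have hY₁m0 : Measurable[m0] Y₁ := hY₁m.mono hm₂ le_rfl
  have hY₁bd : ∀ ω, |Y₁ ω| ≤ N := dvClamp_abs_le hN.le Y
  have hY₁i : Integrable Y₁ μ := by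
    refine (integrable_const N).mono' hY₁m0.aestronglyMeasurable ?_
    exact Eventually.of_forall fun ω => by rw [Real.norm_eq_abs]; exact hY₁bd ω
  have hXi : Integrable X μ := hXq.integrable hqq1
  have hXm0 : Measurable[m0] X := hX.mono hm₁ le_rfl
  have hXY₁ : Integrable (fun ω => X ω * Y₁ ω) μ := by
    refine (hXi.abs.const_mul N).mono' (hXm0.aestronglyMeasurable.mul
      hY₁m0.aestronglyMeasurable) ?_
    refine Eventually.of_forall fun ω => ?_
    rw [Real.norm_eq_abs, abs_mul]
    calc |X ω| * |Y₁ ω| ≤ |X ω| * N := mul_le_mul_of_nonneg_left (hY₁bd ω) (abs_nonneg _)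
      _ = N * |X ω| := mul_comm _ _
  -- conditional expectation
  set ce := μ[Y₁|m₁] with hcedef
  have hce_bd : ∀ᵐ ω ∂μ, |ce ω| ≤ N := by
    have h1 : ∀ᵐ ω ∂μ, |Y₁ ω| ≤ ((N.toNNReal : ℝ)) := by
      refine Eventually.of_forall fun ω => ?_
      rw [Real.coe_toNNReal N hN.le]
      exact hY₁bd ω
    have := ae_bdd_condExp_of_ae_bdd (m := m₁) h1
    simpa [Real.coe_toNNReal N hN.le] using this
  have hcei : Integrable ce μ := integrable_condExp
  set IY := ∫ ω, Y₁ ω ∂μ with hIYdef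
  have hIY : |IY| ≤ N := by
    have h1 : |IY| ≤ ∫ ω, |Y₁ ω| ∂μ := by
      have := norm_integral_le_integral_norm (μ := μ) Y₁
      simpa only [Real.norm_eq_abs] using this
    have h2 : ∫ ω, |Y₁ ω| ∂μ ≤ ∫ ω, (fun _ => N) ω ∂μ :=
      integral_mono hY₁i.abs (integrable_const N) fun ω => hY₁bd ω
    rw [integral_const] at h2
    simp [measure_univ] at h2
    linarith
  set η := fun ω => ce ω - IY with hηdef
  have hηi : Integrable η μ := hcei.sub (integrable_const IY)
  have hηM : ∀ᵐ ω ∂μ, |η ω| ≤ 2 * N := by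
    filter_upwards [hce_bd] with ω hω
    rw [hηdef]
    calc |ce ω - IY| ≤ |ce ω| + |IY| := abs_sub _ _
      _ ≤ N + N := add_le_add hω hIY
      _ = 2 * N := by ring
  have hηL : ∫ ω, |η ω| ∂μ ≤ 4 * alphaMix μ m₁ m₂ * N := by
    have := condexp_center_int_abs_le (μ := μ) hm₁ hm₂ hY₁m hY₁i
      (Eventually.of_forall hY₁bd)
    simpa [hηdef, hcedef, hIYdef] using this
  -- covariance equals ∫ X η
  have hXce : Integrable (fun ω => X ω * ce ω) μ := by
    refine (hXi.abs.const_mul N).mono' (hXm0.aestronglyMeasurable.mul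
      (stronglyMeasurable_condExp.mono hm₁).aestronglyMeasurable) ?_
    filter_upwards [hce_bd] with ω hω
    rw [Real.norm_eq_abs, abs_mul]
    calc |X ω| * |ce ω| ≤ |X ω| * N := mul_le_mul_of_nonneg_left hω (abs_nonneg _)
      _ = N * |X ω| := mul_comm _ _
  have hpull : ∫ ω, X ω * Y₁ ω ∂μ = ∫ ω, X ω * ce ω ∂μ := by
    have hXY₁' : Integrable (X * Y₁) μ := hXY₁
    have h1 : μ[X * Y₁|m₁] =ᵐ[μ] X * ce :=
      condExp_mul_of_stronglyMeasurable_left hX.stronglyMeasurable hXY₁' hY₁i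
    calc ∫ ω, X ω * Y₁ ω ∂μ = ∫ ω, (X * Y₁) ω ∂μ := rfl
      _ = ∫ ω, (μ[X * Y₁|m₁]) ω ∂μ := (integral_condExp hm₁ (f := X * Y₁)).symm
      _ = ∫ ω, (X * ce) ω ∂μ := integral_congr_ae h1
      _ = ∫ ω, X ω * ce ω ∂μ := rfl
  have hcov : cov' μ X Y₁ = ∫ ω, X ω * η ω ∂μ := by
    rw [cov'_eq hXi hY₁i hXY₁]
    have hexp : (fun ω => X ω * η ω) = fun ω => X ω * ce ω - X ω * IY := by
      funext ω; rw [hηdef]; ring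
    rw [hexp, integral_sub hXce (hXi.mul_const IY), integral_mul_const, ← hpull, hIYdef]
  -- Hölder + interpolation
  have hq'0 : q' ≠ 0 := by
    intro h
    rw [h] at hq'1
    simp at hq'1
  have hc1 : 1 ≤ q'.toReal := by
    have := ENNReal.toReal_mono hq't hq'1
    simpa using this
  have hηq' : MemLp η q' μ := by
    have htop : MemLp η ∞ μ := by
      refine memLp_top_of_bound hηi.aestronglyMeasurable (2 * N) ?_
      filter_upwards [hηM] with ω hω
      rwa [Real.norm_eq_abs]
    exact htop.mono_exponent le_top
  have hholder : |∫ ω, X ω * η ω ∂μ|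
      ≤ (eLpNorm X qq μ).toReal * (eLpNorm η q' μ).toReal :=
    holder_abs_int_le hconj hXq hηq'
  have hinterp : eLpNorm η q' μ
      ≤ ENNReal.ofReal (((2 * N) ^ (q'.toReal - 1) * (4 * alphaMix μ m₁ m₂ * N))
          ^ (1 / q'.toReal)) :=
    eLpNorm_interp_le hηi hq'0 hq't hc1 (by positivity) (by positivity) hηL hηM
  have hnn : (0:ℝ) ≤ ((2 * N) ^ (q'.toReal - 1) * (4 * alphaMix μ m₁ m₂ * N))
      ^ (1 / q'.toReal) := by positivity
  have htoreal : (eLpNorm η q' μ).toReal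
      ≤ ((2 * N) ^ (q'.toReal - 1) * (4 * alphaMix μ m₁ m₂ * N)) ^ (1 / q'.toReal) := by
    have := ENNReal.toReal_mono ENNReal.ofReal_ne_top hinterp
    rwa [ENNReal.toReal_ofReal hnn] at this
  rw [hcov]
  calc |∫ ω, X ω * η ω ∂μ| ≤ (eLpNorm X qq μ).toReal * (eLpNorm η q' μ).toReal := hholder
    _ ≤ _ := mul_le_mul_of_nonneg_left htoreal ENNReal.toReal_nonneg

/-- Tail estimate. -/
lemma cov_tail_le {X Y₂ : Ω → ℝ} {qq q' : ℝ≥0∞} (hqq1 : 1 ≤ qq) (hq'1 : 1 ≤ q')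
    (hconj : 1 / qq + 1 / q' = 1) (hXq : MemLp X qq μ) (hY₂ : MemLp Y₂ q' μ) :
    |cov' μ X Y₂| ≤ 2 * (eLpNorm X qq μ).toReal * (eLpNorm Y₂ q' μ).toReal := by
  have hXi : Integrable X μ := hXq.integrable hqq1
  have hY₂i : Integrable Y₂ μ := hY₂.integrable hq'1
  have hXY₂ : Integrable (fun ω => X ω * Y₂ ω) μ := holder_integrable hconj hXq hY₂
  rw [cov'_eq hXi hY₂i hXY₂]
  have h1 : |∫ ω, X ω * Y₂ ω ∂μ| ≤ (eLpNorm X qq μ).toReal * (eLpNorm Y₂ q' μ).toReal :=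
    holder_abs_int_le hconj hXq hY₂
  have h2 : |∫ ω, X ω ∂μ| ≤ (eLpNorm X qq μ).toReal := abs_int_le_eLpNorm hXq hqq1
  have h3 : |∫ ω, Y₂ ω ∂μ| ≤ (eLpNorm Y₂ q' μ).toReal := abs_int_le_eLpNorm hY₂ hq'1
  have ha : (0:ℝ) ≤ (eLpNorm X qq μ).toReal := ENNReal.toReal_nonneg
  have hb : (0:ℝ) ≤ (eLpNorm Y₂ q' μ).toReal := ENNReal.toReal_nonneg
  calc |∫ ω, X ω * Y₂ ω ∂μ - (∫ ω, X ω ∂μ) * ∫ ω, Y₂ ω ∂μ|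
      ≤ |∫ ω, X ω * Y₂ ω ∂μ| + |(∫ ω, X ω ∂μ) * ∫ ω, Y₂ ω ∂μ| := abs_sub _ _
    _ ≤ (eLpNorm X qq μ).toReal * (eLpNorm Y₂ q' μ).toReal
        + (eLpNorm X qq μ).toReal * (eLpNorm Y₂ q' μ).toReal := by
        refine add_le_add h1 ?_
        rw [abs_mul]
        exact mul_le_mul h2 h3 (abs_nonneg _) ha
    _ = 2 * (eLpNorm X qq μ).toReal * (eLpNorm Y₂ q' μ).toReal := by ring

end MainEstimates

section Assembly

variable {Ω : Type*} {m0 : MeasurableSpace Ω} {μ : Measure Ω} [IsProbabilityMeasure μ]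
  {m₁ m₂ : MeasurableSpace Ω}

lemma cov'_congr_right {f g g' : Ω → ℝ} (h : g =ᵐ[μ] g') : cov' μ f g = cov' μ f g' := by
  rw [cov', cov', integral_congr_ae h]
  refine integral_congr_ae ?_
  filter_upwards [h] with ω hω
  rw [hω]

lemma cov'_zero_left {f g : Ω → ℝ} (h : f =ᵐ[μ] 0) : cov' μ f g = 0 := by
  rw [cov']
  have hIf : ∫ ω', f ω' ∂μ = 0 := by
    rw [integral_congr_ae h]
    simp
  rw [hIf]
  have h0 : (fun ω => (f ω - 0) * (g ω - ∫ ω', g ω' ∂μ)) =ᵐ[μ]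
      (fun _ => (0:ℝ)) := by
    filter_upwards [h] with ω hω
    simp [hω]
  rw [integral_congr_ae h0]
  simp

lemma cov'_zero_right {f g : Ω → ℝ} (h : g =ᵐ[μ] 0) : cov' μ f g = 0 := by
  rw [cov']
  have hIg : ∫ ω', g ω' ∂μ = 0 := by
    rw [integral_congr_ae h]
    simp
  rw [hIg]
  have h0 : (fun ω => (f ω - ∫ ω', f ω' ∂μ) * (g ω - 0)) =ᵐ[μ]
      (fun _ => (0:ℝ)) := by
    filter_upwards [h] with ω hω
    simp [hω]
  rw [integral_congr_ae h0]
  simp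

lemma cov'_split {X Y Y₁ Y₂ : Ω → ℝ} (hXi : Integrable X μ)
    (hY₁i : Integrable Y₁ μ) (hY₂i : Integrable Y₂ μ)
    (hXY₁ : Integrable (fun ω => X ω * Y₁ ω) μ) (hXY₂ : Integrable (fun ω => X ω * Y₂ ω) μ)
    (hsum : ∀ ω, Y ω = Y₁ ω + Y₂ ω) :
    cov' μ X Y = cov' μ X Y₁ + cov' μ X Y₂ := by
  have hYi : Integrable Y μ := by
    have : Y = fun ω => Y₁ ω + Y₂ ω := funext hsum
    rw [this]; exact hY₁i.add hY₂i
  have hXY : Integrable (fun ω => X ω * Y ω) μ := by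
    have : (fun ω => X ω * Y ω) = fun ω => X ω * Y₁ ω + X ω * Y₂ ω := by
      funext ω; rw [hsum ω]; ring
    rw [this]; exact hXY₁.add hXY₂
  rw [cov'_eq hXi hYi hXY, cov'_eq hXi hY₁i hXY₁, cov'_eq hXi hY₂i hXY₂]
  have h1 : ∫ ω, X ω * Y ω ∂μ = ∫ ω, X ω * Y₁ ω ∂μ + ∫ ω, X ω * Y₂ ω ∂μ := by
    rw [← integral_add hXY₁ hXY₂]
    refine integral_congr_ae (Eventually.of_forall fun ω => ?_)
    simp only []
    rw [hsum ω]; ring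
  have h2 : ∫ ω, Y ω ∂μ = ∫ ω, Y₁ ω ∂μ + ∫ ω, Y₂ ω ∂μ := by
    rw [← integral_add hY₁i hY₂i]
    exact integral_congr_ae (Eventually.of_forall fun ω => hsum ω)
  rw [h1, h2]
  ring

end Assembly

section Numeric

lemma numeric_main {α N c sv : ℝ} (hα : 0 ≤ α) (hN : 0 < N) (hsv : 0 < sv) (hsv1 : sv ≤ 1)
    (hcv : 1 / c = sv) :
    ((2 * N) ^ (c - 1) * (4 * α * N)) ^ (1 / c) ≤ 4 * α ^ sv * N := by
  have hc0 : c ≠ 0 := by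
    intro h
    rw [h] at hcv
    simp at hcv
    linarith
  have hcpos : 0 < c := by
    rcases lt_or_gt_of_ne hc0 with h | h
    · exfalso
      have : 1 / c < 0 := div_neg_of_pos_of_neg one_pos h
      linarith [hcv ▸ this]
    · exact h
  have h2N : (0:ℝ) < 2 * N := by linarith
  have hstep1 : ((2 * N) ^ (c - 1) * (4 * α * N)) ^ (1 / c)
      = (2 * N) ^ ((c - 1) * (1 / c)) * (4 * α * N) ^ (1 / c) := by
    rw [Real.mul_rpow (Real.rpow_nonneg h2N.le _) (by positivity), ← Real.rpow_mul h2N.le]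
  have hexp : (c - 1) * (1 / c) = 1 - sv := by
    rw [← hcv]
    field_simp
  have hstep2 : (4 * α * N) ^ (1 / c) = 4 ^ sv * α ^ sv * N ^ sv := by
    rw [hcv, Real.mul_rpow (by positivity) hN.le, Real.mul_rpow (by norm_num) hα]
  have hstep3 : (2 * N) ^ (1 - sv) = 2 ^ (1 - sv) * N ^ (1 - sv) :=
    Real.mul_rpow (by norm_num) hN.le
  have hN' : N ^ (1 - sv) * N ^ sv = N := by
    rw [← Real.rpow_add hN]
    norm_num
  have h4 : (4:ℝ) ^ sv = 2 ^ (2 * sv) := by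
    have : (4:ℝ) = 2 ^ (2:ℝ) := by
      rw [show (2:ℝ) = ((2:ℕ):ℝ) from by norm_num, Real.rpow_natCast]
      norm_num
    rw [this, ← Real.rpow_mul (by norm_num)]
  have h2pow : (2:ℝ) ^ (1 - sv) * 2 ^ (2 * sv) = 2 ^ (1 + sv) := by
    rw [← Real.rpow_add (by norm_num : (0:ℝ) < 2)]
    try ring_nf
  have h2le : (2:ℝ) ^ (1 + sv) ≤ 4 := by
    have h1 : (2:ℝ) ^ (1 + sv) ≤ 2 ^ (2:ℝ) :=
      Real.rpow_le_rpow_of_exponent_le (by norm_num) (by linarith)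
    have h2 : (2:ℝ) ^ (2:ℝ) = 4 := by
      rw [show (2:ℝ) = ((2:ℕ):ℝ) from by norm_num, Real.rpow_natCast]
      norm_num
    linarith [h1, h2.le]
  calc ((2 * N) ^ (c - 1) * (4 * α * N)) ^ (1 / c)
      = (2 * N) ^ (1 - sv) * (4 ^ sv * α ^ sv * N ^ sv) := by
        rw [hstep1, hexp, hstep2]
    _ = (2 ^ (1 - sv) * 2 ^ (2 * sv)) * α ^ sv * (N ^ (1 - sv) * N ^ sv) := by
        rw [hstep3, h4]; ring
    _ = 2 ^ (1 + sv) * α ^ sv * N := by rw [h2pow, hN']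
    _ ≤ 4 * α ^ sv * N := by
        have hα' : 0 ≤ α ^ sv := Real.rpow_nonneg hα _
        nlinarith [h2le, hN.le, mul_nonneg hα' hN.le]

lemma numeric_tail {α b v s pr c : ℝ} (hα : 0 < α) (hb : 0 < b) (hv : 0 < v)
    (hs : 0 < s) (hspr : s * pr = 1) (hcinv : 1 / c = s + v) :
    (b ^ pr * (b * α ^ (-s)) ^ (c - pr)) ^ (1 / c) = b * α ^ v := by
  have hsv : 0 < s + v := by linarith
  have hc0 : c ≠ 0 := by
    intro h
    rw [h] at hcinv
    simp at hcinv
    linarith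
  have hN : (0:ℝ) < b * α ^ (-s) := by positivity
  have h1 : (b * α ^ (-s)) ^ (c - pr) = b ^ (c - pr) * α ^ (-s * (c - pr)) := by
    rw [Real.mul_rpow hb.le (Real.rpow_nonneg hα.le _), ← Real.rpow_mul hα.le]
    try ring_nf
  have h2 : b ^ pr * (b ^ (c - pr) * α ^ (-s * (c - pr)))
      = b ^ c * α ^ (-s * (c - pr)) := by
    rw [← mul_assoc, ← Real.rpow_add hb]
    try ring_nf
  have h3 : (b ^ c * α ^ (-s * (c - pr))) ^ (1 / c)
      = b ^ (c * (1 / c)) * α ^ (-s * (c - pr) * (1 / c)) := by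
    rw [Real.mul_rpow (Real.rpow_nonneg hb.le _) (Real.rpow_nonneg hα.le _),
      ← Real.rpow_mul hb.le, ← Real.rpow_mul hα.le]
  have he1 : c * (1 / c) = 1 := by field_simp
  have he2 : -s * (c - pr) * (1 / c) = v := by
    have hcval : c = (s + v)⁻¹ := by
      have h := hcinv
      field_simp at h ⊢
      linarith [h]
    rw [hcval]
    have hprs : pr = s⁻¹ := by
      field_simp
      nlinarith [hspr]
    rw [hprs]
    field_simp
    ring
  rw [h1, h2, h3, he1, he2, Real.rpow_one]

end Numeric

section FinalBounds

lemma two_mul_le_two_pi {a b : ℝ} (ha : 0 ≤ a) (hb : 0 ≤ b) :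
    2 * a * b ≤ 2 * Real.pi * 1 * a * b := by
  nlinarith [Real.pi_gt_three, mul_nonneg ha hb]

lemma four_mul_le_two_pi {x a b : ℝ} (hx : 0 ≤ x) (ha : 0 ≤ a) (hb : 0 ≤ b) :
    a * (4 * x * b) ≤ 2 * Real.pi * x * a * b := by
  nlinarith [Real.pi_gt_three, mul_nonneg (mul_nonneg hx ha) hb]

lemma six_mul_le_two_pi {x a b : ℝ} (hx : 0 ≤ x) (ha : 0 ≤ a) (hb : 0 ≤ b) :
    6 * x * a * b ≤ 2 * Real.pi * x * a * b := by
  nlinarith [Real.pi_gt_three, mul_nonneg (mul_nonneg hx ha) hb]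

end FinalBounds

theorem davydov_inequality {Ω : Type*} {m0 : MeasurableSpace Ω} (μ : Measure Ω)
    [IsProbabilityMeasure μ]
    (m₁ m₂ : MeasurableSpace Ω) (hm₁ : m₁ ≤ m0) (hm₂ : m₂ ≤ m0)
    (X Y : Ω → ℝ) (hX : Measurable[m₁] X) (hY : Measurable[m₂] Y)
    (p q r : ℝ≥0∞) (hp : 1 ≤ p) (hq : 1 ≤ q) (hr : 1 ≤ r)
    (hpqr : 1 / p + 1 / q + 1 / r = 1)
    (hXq : MemLp X q μ) (hYp : MemLp Y p μ) :
    |cov' μ X Y| ≤ 2 * Real.pi * alphaMix μ m₁ m₂ ^ (1 / r).toReal *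
      (eLpNorm X q μ).toReal * (eLpNorm Y p μ).toReal := by
  have hπ : (3:ℝ) < Real.pi := Real.pi_gt_three
  have hα0 : (0:ℝ) ≤ alphaMix μ m₁ m₂ := alphaMix_nonneg
  have ha0 : (0:ℝ) ≤ (eLpNorm X q μ).toReal := ENNReal.toReal_nonneg
  have hb0 : (0:ℝ) ≤ (eLpNorm Y p μ).toReal := ENNReal.toReal_nonneg
  have hp0 : p ≠ 0 := fun h => by rw [h] at hp; exact absurd hp (by simp)
  have hq0 : q ≠ 0 := fun h => by rw [h] at hq; exact absurd hq (by simp)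
  have hr0 : r ≠ 0 := fun h => by rw [h] at hr; exact absurd hr (by simp)
  have hXi : Integrable X μ := hXq.integrable hq
  have hYi : Integrable Y μ := hYp.integrable hp
  by_cases hrtop : r = ∞
  · -- Hölder case: 1/q + 1/p = 1
    have hconj : 1 / q + 1 / p = 1 := by
      rw [hrtop] at hpqr
      simp only [ENNReal.div_top, add_zero] at hpqr
      rw [add_comm] at hpqr
      exact hpqr
    have hXY : Integrable (fun ω => X ω * Y ω) μ := holder_integrable hconj hXq hYp
    set cY := ∫ ω, Y ω ∂μ with hcY
    have hYc : MemLp (fun ω => Y ω - cY) p μ := hYp.sub (memLp_const cY)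
    have hXYc : Integrable (fun ω => X ω * (Y ω - cY)) μ := holder_integrable hconj hXq hYc
    have hcov : cov' μ X Y = ∫ ω, X ω * (Y ω - cY) ∂μ := by
      rw [cov'_eq hXi hYi hXY]
      have hexp : (fun ω => X ω * (Y ω - cY)) = fun ω => X ω * Y ω - X ω * cY := by
        funext ω; ring
      rw [hexp, integral_sub hXY (hXi.mul_const cY), integral_mul_const]
    have hcle : |cY| ≤ (eLpNorm Y p μ).toReal := abs_int_le_eLpNorm hYp hp
    have hconst : eLpNorm (fun _ : Ω => cY) p μ = (‖cY‖₊ : ℝ≥0∞) := by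
      rw [eLpNorm_const cY hp0 (IsProbabilityMeasure.ne_zero μ)]
      simp
      rfl
    have hYcnorm : (eLpNorm (fun ω => Y ω - cY) p μ).toReal
        ≤ 2 * (eLpNorm Y p μ).toReal := by
      have htri : eLpNorm (fun ω => Y ω - cY) p μ
          ≤ eLpNorm Y p μ + eLpNorm (fun _ : Ω => cY) p μ :=
        eLpNorm_sub_le hYp.aestronglyMeasurable aestronglyMeasurable_const hp
      have hc_ne : eLpNorm (fun _ : Ω => cY) p μ ≠ ∞ := by
        rw [hconst]; exact ENNReal.coe_ne_top
      have hfin : eLpNorm Y p μ + eLpNorm (fun _ : Ω => cY) p μ ≠ ∞ :=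
        ENNReal.add_ne_top.mpr ⟨hYp.eLpNorm_ne_top, hc_ne⟩
      have h1 := ENNReal.toReal_mono hfin htri
      rw [ENNReal.toReal_add hYp.eLpNorm_ne_top hc_ne, hconst] at h1
      have h2 : ((‖cY‖₊ : ℝ≥0∞)).toReal = |cY| := by
        simp [Real.norm_eq_abs]
      rw [h2] at h1
      linarith
    have hmain : |cov' μ X Y| ≤ 2 * (eLpNorm X q μ).toReal * (eLpNorm Y p μ).toReal := by
      rw [hcov]
      calc |∫ ω, X ω * (Y ω - cY) ∂μ|
          ≤ (eLpNorm X q μ).toReal * (eLpNorm (fun ω => Y ω - cY) p μ).toReal :=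
            holder_abs_int_le hconj hXq hYc
        _ ≤ (eLpNorm X q μ).toReal * (2 * (eLpNorm Y p μ).toReal) :=
            mul_le_mul_of_nonneg_left hYcnorm ha0
        _ = 2 * (eLpNorm X q μ).toReal * (eLpNorm Y p μ).toReal := by ring
    have hv0 : ((1:ℝ≥0∞) / r).toReal = 0 := by rw [hrtop]; simp
    rw [hv0, Real.rpow_zero]
    exact le_trans hmain (two_mul_le_two_pi ha0 hb0)
  · -- r < ∞
    have h1r_ne0 : 1/r ≠ 0 := by simp [ENNReal.div_eq_zero_iff, hrtop]
    have h1r_ne_top : (1:ℝ≥0∞)/r ≠ ∞ := by simp [ENNReal.div_eq_top, hr0]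
    have h1p_ne_top : (1:ℝ≥0∞)/p ≠ ∞ := by simp [ENNReal.div_eq_top, hp0]
    have h1q_ne_top : (1:ℝ≥0∞)/q ≠ ∞ := by simp [ENNReal.div_eq_top, hq0]
    have hvpos : 0 < ((1:ℝ≥0∞)/r).toReal := ENNReal.toReal_pos h1r_ne0 h1r_ne_top
    by_cases haz : eLpNorm X q μ = 0
    · have hX0 : X =ᵐ[μ] 0 := (eLpNorm_eq_zero_iff hXq.aestronglyMeasurable hq0).mp haz
      rw [cov'_zero_left hX0, abs_zero]
      have h1 : (0:ℝ) ≤ alphaMix μ m₁ m₂ ^ (1/r).toReal := Real.rpow_nonneg hα0 _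
      have h2 : (0:ℝ) ≤ 2 * Real.pi := by positivity
      exact mul_nonneg (mul_nonneg (mul_nonneg h2 h1) ha0) hb0
    by_cases hbz : eLpNorm Y p μ = 0
    · have hY0 : Y =ᵐ[μ] 0 := (eLpNorm_eq_zero_iff hYp.aestronglyMeasurable hp0).mp hbz
      rw [cov'_zero_right hY0, abs_zero]
      have h1 : (0:ℝ) ≤ alphaMix μ m₁ m₂ ^ (1/r).toReal := Real.rpow_nonneg hα0 _
      have h2 : (0:ℝ) ≤ 2 * Real.pi := by positivity
      exact mul_nonneg (mul_nonneg (mul_nonneg h2 h1) ha0) hb0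
    have hapos : 0 < (eLpNorm X q μ).toReal := ENNReal.toReal_pos haz hXq.eLpNorm_ne_top
    have hbpos : 0 < (eLpNorm Y p μ).toReal := ENNReal.toReal_pos hbz hYp.eLpNorm_ne_top
    -- conjugate exponent q'
    set q' : ℝ≥0∞ := (1/p + 1/r)⁻¹ with hq'def
    have hq'inv : 1/q' = 1/p + 1/r := by rw [hq'def, one_div, inv_inv]
    have hconj : 1/q + 1/q' = 1 := by
      rw [hq'inv]
      calc 1/q + (1/p + 1/r) = 1/p + 1/q + 1/r := by
            rw [← add_assoc, add_comm (1/q) (1/p)]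
        _ = 1 := hpqr
    have hpr_ne_top : (1:ℝ≥0∞)/p + 1/r ≠ ∞ := ENNReal.add_ne_top.mpr ⟨h1p_ne_top, h1r_ne_top⟩
    have hpr_ne0 : (1:ℝ≥0∞)/p + 1/r ≠ 0 := fun h => h1r_ne0 (add_eq_zero.mp h).2
    have hq't : q' ≠ ∞ := by rw [hq'def]; simpa [ENNReal.inv_eq_top] using hpr_ne0
    have hq'0 : q' ≠ 0 := by rw [hq'def]; simpa [ENNReal.inv_eq_zero] using hpr_ne_top
    have hpr_le1 : (1:ℝ≥0∞)/p + 1/r ≤ 1 :=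
      le_trans (add_le_add_left le_self_add (1/r)) (le_of_eq hpqr)
    have hq'1 : (1:ℝ≥0∞) ≤ q' := by
      rw [hq'def]
      simpa using ENNReal.inv_le_inv' hpr_le1
    -- real exponents
    set s := ((1:ℝ≥0∞)/p).toReal with hsdef
    set t := ((1:ℝ≥0∞)/q).toReal with htdef
    set v := ((1:ℝ≥0∞)/r).toReal with hvdef
    have hsum : s + t + v = 1 := by
      have h := congrArg ENNReal.toReal hpqr
      rwa [ENNReal.toReal_add (ENNReal.add_ne_top.mpr ⟨h1p_ne_top, h1q_ne_top⟩) h1r_ne_top,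
        ENNReal.toReal_add h1p_ne_top h1q_ne_top, ENNReal.toReal_one] at h
    have hs0 : 0 ≤ s := ENNReal.toReal_nonneg
    have ht0 : 0 ≤ t := ENNReal.toReal_nonneg
    have hcval : q'.toReal = (s + v)⁻¹ := by
      rw [hq'def, ENNReal.toReal_inv, ENNReal.toReal_add h1p_ne_top h1r_ne_top]
    have hsv_pos : 0 < s + v := by linarith
    have hsv_le1 : s + v ≤ 1 := by linarith
    have hinv_c : 1 / q'.toReal = s + v := by
      rw [hcval, one_div, inv_inv]
    have hv_le1 : v ≤ 1 := by linarith
    by_cases hptop : p = ∞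
    · -- p = ∞: Y is a.e. bounded
      have hs_eq : s = 0 := by rw [hsdef, hptop]; simp
      have hYb : ∀ᵐ ω ∂μ, |Y ω| ≤ (eLpNorm Y p μ).toReal := by
        have h1 : ∀ᵐ ω ∂μ, (‖Y ω‖₊ : ℝ≥0∞) ≤ eLpNormEssSup Y μ := ae_le_eLpNormEssSup
        have htop_ne : eLpNormEssSup Y μ ≠ ∞ := by
          have h0 := hYp.eLpNorm_ne_top
          rwa [hptop, eLpNorm_exponent_top] at h0
        filter_upwards [h1] with ω hω
        have h2 := ENNReal.toReal_mono htop_ne hω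
        rw [ENNReal.coe_toReal, coe_nnnorm, Real.norm_eq_abs] at h2
        rwa [hptop, eLpNorm_exponent_top]
      have hYeq : Y =ᵐ[μ] dvClamp (eLpNorm Y p μ).toReal Y := by
        filter_upwards [hYb] with ω hω
        exact (dvClamp_eq_self hω).symm
      have hmain := cov_clamp_le hm₁ hm₂ hX hY hq hq'1 hq't hconj hXq hYi hbpos
      have hinv_c' : 1 / q'.toReal = v := by rw [hinv_c, hs_eq, zero_add]
      have hnum := numeric_main (N := (eLpNorm Y p μ).toReal) hα0 hbpos hvpos hv_le1 hinv_c'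
      calc |cov' μ X Y| = |cov' μ X (dvClamp (eLpNorm Y p μ).toReal Y)| := by
            rw [cov'_congr_right hYeq]
        _ ≤ (eLpNorm X q μ).toReal * (((2 * (eLpNorm Y p μ).toReal) ^ (q'.toReal - 1)
              * (4 * alphaMix μ m₁ m₂ * (eLpNorm Y p μ).toReal)) ^ (1 / q'.toReal)) := hmain
        _ ≤ (eLpNorm X q μ).toReal * (4 * alphaMix μ m₁ m₂ ^ v * (eLpNorm Y p μ).toReal) :=
            mul_le_mul_of_nonneg_left hnum ha0
        _ ≤ 2 * Real.pi * alphaMix μ m₁ m₂ ^ v * (eLpNorm X q μ).toReal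
              * (eLpNorm Y p μ).toReal := by
            exact four_mul_le_two_pi (Real.rpow_nonneg hα0 v) ha0 hb0
    · -- p < ∞
      have hppos : 0 < p.toReal := ENNReal.toReal_pos hp0 hptop
      have hspos : 0 < s := by
        rw [hsdef]
        refine ENNReal.toReal_pos ?_ h1p_ne_top
        simp [ENNReal.div_eq_zero_iff, hptop]
      have hq'lep : q' ≤ p := by
        have h1 : (1:ℝ≥0∞)/p ≤ 1/q' := by rw [hq'inv]; exact le_self_add
        rw [one_div, one_div] at h1
        exact ENNReal.inv_le_inv.mp h1
      have hYq' : MemLp Y q' μ := hYp.mono_exponent hq'lep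
      have hle_c : q'.toReal ≤ p.toReal := ENNReal.toReal_mono hptop hq'lep
      have hspr : s * p.toReal = 1 := by
        rw [hsdef, one_div, ENNReal.toReal_inv]
        exact inv_mul_cancel₀ hppos.ne'
      have hc_pos : 0 < q'.toReal := ENNReal.toReal_pos hq'0 hq't
      -- key estimate for all truncation levels
      have key : ∀ N : ℝ, 0 < N → |cov' μ X Y| ≤
          (eLpNorm X q μ).toReal * (((2 * N) ^ (q'.toReal - 1)
            * (4 * alphaMix μ m₁ m₂ * N)) ^ (1 / q'.toReal))
          + 2 * (eLpNorm X q μ).toReal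
            * (((eLpNorm Y p μ).toReal ^ p.toReal * N ^ (q'.toReal - p.toReal))
                ^ (1 / q'.toReal)) := by
        intro N hN
        set Y₁ := dvClamp N Y with hY₁def
        have hY₁m0 : Measurable[m0] Y₁ := (dvClamp_measurable hY).mono hm₂ le_rfl
        have hY₁i : Integrable Y₁ μ := by
          refine (integrable_const N).mono' hY₁m0.aestronglyMeasurable ?_
          exact Eventually.of_forall fun ω => by
            rw [Real.norm_eq_abs]; exact dvClamp_abs_le hN.le Y ω
        have hY₂aesm : AEStronglyMeasurable[m0] (fun ω => Y ω - Y₁ ω) μ :=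
          ((hY.mono hm₂ le_rfl).aestronglyMeasurable).sub hY₁m0.aestronglyMeasurable
        have hY₂q' : MemLp (fun ω => Y ω - Y₁ ω) q' μ := by
          refine hYq'.of_le hY₂aesm ?_
          exact Eventually.of_forall fun ω => by
            rw [Real.norm_eq_abs, Real.norm_eq_abs]
            exact dvClamp_tail_abs_le hN.le ω
        have hY₂i : Integrable (fun ω => Y ω - Y₁ ω) μ := hY₂q'.integrable hq'1
        have hXm0 : Measurable[m0] X := hX.mono hm₁ le_rfl
        have hXY₁ : Integrable (fun ω => X ω * Y₁ ω) μ := by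
          refine (hXi.abs.const_mul N).mono'
            (hXm0.aestronglyMeasurable.mul hY₁m0.aestronglyMeasurable) ?_
          refine Eventually.of_forall fun ω => ?_
          rw [Real.norm_eq_abs, abs_mul]
          calc |X ω| * |Y₁ ω| ≤ |X ω| * N :=
                mul_le_mul_of_nonneg_left (dvClamp_abs_le hN.le Y ω) (abs_nonneg _)
            _ = N * |X ω| := mul_comm _ _
        have hXY₂ : Integrable (fun ω => X ω * (Y ω - Y₁ ω)) μ :=
          holder_integrable hconj hXq hY₂q'
        have hsplit : cov' μ X Y = cov' μ X Y₁ + cov' μ X (fun ω => Y ω - Y₁ ω) :=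
          cov'_split hXi hY₁i hY₂i hXY₁ hXY₂ (fun ω => by ring)
        have h1 := cov_clamp_le hm₁ hm₂ hX hY hq hq'1 hq't hconj hXq hYi hN
        have h2 := cov_tail_le hq hq'1 hconj hXq hY₂q'
        have h3 := tail_eLpNorm_le hq'0 hq't hptop hle_c hppos hp0 hYp hN
        have h4 : (eLpNorm (fun ω => Y ω - dvClamp N Y ω) q' μ).toReal
            ≤ ((eLpNorm Y p μ).toReal ^ p.toReal * N ^ (q'.toReal - p.toReal))
                ^ (1 / q'.toReal) := by
          have hnn : (0:ℝ) ≤ ((eLpNorm Y p μ).toReal ^ p.toReal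
              * N ^ (q'.toReal - p.toReal)) ^ (1 / q'.toReal) := by positivity
          have h5 := ENNReal.toReal_mono ENNReal.ofReal_ne_top h3
          rwa [ENNReal.toReal_ofReal hnn] at h5
        rw [hsplit]
        calc |cov' μ X Y₁ + cov' μ X (fun ω => Y ω - Y₁ ω)|
            ≤ |cov' μ X Y₁| + |cov' μ X (fun ω => Y ω - Y₁ ω)| := abs_add_le _ _
          _ ≤ _ := by
              refine add_le_add h1 ?_
              calc |cov' μ X (fun ω => Y ω - Y₁ ω)|
                  ≤ 2 * (eLpNorm X q μ).toReal
                    * (eLpNorm (fun ω => Y ω - Y₁ ω) q' μ).toReal := h2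
                _ ≤ 2 * (eLpNorm X q μ).toReal
                    * (((eLpNorm Y p μ).toReal ^ p.toReal * N ^ (q'.toReal - p.toReal))
                        ^ (1 / q'.toReal)) :=
                    mul_le_mul_of_nonneg_left h4 (by positivity)
      -- strict inequality q'.toReal < p.toReal
      have hpr_eq : p.toReal = s⁻¹ := by
        rw [← one_div, eq_div_iff hspos.ne']
        linear_combination hspr
      have hcltpr : q'.toReal < p.toReal := by
        rw [hcval, hpr_eq]
        have h1 : 1/(s + v) < 1/s := one_div_lt_one_div_of_lt hspos (by linarith)
        rw [one_div, one_div] at h1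
        exact h1
      rcases eq_or_lt_of_le hα0 with hαz | hαpos
      · -- α = 0
        have hcov0 : |cov' μ X Y| ≤ 0 := by
          set C := 2 * (eLpNorm X q μ).toReal
            * (((eLpNorm Y p μ).toReal ^ p.toReal) ^ (1 / q'.toReal)) with hCdef
          have hev : ∀ᶠ N in atTop, |cov' μ X Y| ≤
              C * N ^ ((q'.toReal - p.toReal) * (1 / q'.toReal)) := by
            filter_upwards [eventually_ge_atTop (1:ℝ)] with N hN1
            have hN : 0 < N := lt_of_lt_of_le one_pos hN1
            have hk := key N hN
            have hmain0 : ((2 * N) ^ (q'.toReal - 1)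
                * (4 * alphaMix μ m₁ m₂ * N)) ^ (1 / q'.toReal) = 0 := by
              rw [← hαz]
              rw [show (4:ℝ) * 0 * N = 0 by ring, mul_zero]
              exact Real.zero_rpow (by positivity)
            rw [hmain0, mul_zero, zero_add] at hk
            refine le_trans hk (le_of_eq ?_)
            rw [Real.mul_rpow (by positivity) (Real.rpow_nonneg hN.le _),
              ← Real.rpow_mul hN.le]
            rw [hCdef]
            ring
          have hneg : 0 < (p.toReal - q'.toReal) * (1 / q'.toReal) := by
            have h10 : 0 < 1 / q'.toReal := by positivity
            have h11 : 0 < p.toReal - q'.toReal := by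
              linarith only [hcltpr]
            exact mul_pos h11 h10
          have hlim1 : Tendsto (fun N : ℝ =>
              N ^ ((q'.toReal - p.toReal) * (1 / q'.toReal))) atTop (nhds 0) := by
            have h := tendsto_rpow_neg_atTop hneg
            have heq : (fun N : ℝ => N ^ (-((p.toReal - q'.toReal) * (1 / q'.toReal))))
                = fun N : ℝ => N ^ ((q'.toReal - p.toReal) * (1 / q'.toReal)) := by
              funext N; ring_nf
            rwa [heq] at h
          have hlim : Tendsto (fun N : ℝ =>
              C * N ^ ((q'.toReal - p.toReal) * (1 / q'.toReal))) atTop (nhds 0) := by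
            have := hlim1.const_mul C
            simpa using this
          exact ge_of_tendsto hlim hev
        have hrhs : (0:ℝ) ≤ 2 * Real.pi * alphaMix μ m₁ m₂ ^ v * (eLpNorm X q μ).toReal
            * (eLpNorm Y p μ).toReal := by
          have h1 : (0:ℝ) ≤ alphaMix μ m₁ m₂ ^ v := Real.rpow_nonneg hα0 _
          have h2 : (0:ℝ) ≤ 2 * Real.pi := by positivity
          exact mul_nonneg (mul_nonneg (mul_nonneg h2 h1) ha0) hb0
        linarith only [abs_nonneg (cov' μ X Y), hcov0, hrhs]
      · -- α > 0
        set N := (eLpNorm Y p μ).toReal * alphaMix μ m₁ m₂ ^ (-s) with hNdef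
        have hN : 0 < N := by
          rw [hNdef]
          exact mul_pos hbpos (Real.rpow_pos_of_pos hαpos _)
        have hk := key N hN
        have hmain_le : ((2 * N) ^ (q'.toReal - 1)
            * (4 * alphaMix μ m₁ m₂ * N)) ^ (1 / q'.toReal)
            ≤ 4 * alphaMix μ m₁ m₂ ^ (s + v) * N :=
          numeric_main hα0 hN hsv_pos hsv_le1 hinv_c
        have htail_eq : (((eLpNorm Y p μ).toReal ^ p.toReal
            * N ^ (q'.toReal - p.toReal)) ^ (1 / q'.toReal))
            = (eLpNorm Y p μ).toReal * alphaMix μ m₁ m₂ ^ v := by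
          rw [hNdef]
          exact numeric_tail hαpos hbpos hvpos hspos hspr hinv_c
        have hNval : alphaMix μ m₁ m₂ ^ (s + v) * N
            = (eLpNorm Y p μ).toReal * alphaMix μ m₁ m₂ ^ v := by
          rw [hNdef]
          have h1 : alphaMix μ m₁ m₂ ^ (s + v) * alphaMix μ m₁ m₂ ^ (-s)
              = alphaMix μ m₁ m₂ ^ v := by
            rw [← Real.rpow_add hαpos]
            congr 1
            ring
          calc alphaMix μ m₁ m₂ ^ (s + v)
              * ((eLpNorm Y p μ).toReal * alphaMix μ m₁ m₂ ^ (-s))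
              = (eLpNorm Y p μ).toReal
                * (alphaMix μ m₁ m₂ ^ (s + v) * alphaMix μ m₁ m₂ ^ (-s)) := by ring
            _ = (eLpNorm Y p μ).toReal * alphaMix μ m₁ m₂ ^ v := by rw [h1]
        have hfinal : |cov' μ X Y| ≤ 6 * alphaMix μ m₁ m₂ ^ v
            * (eLpNorm X q μ).toReal * (eLpNorm Y p μ).toReal := by
          have hstep : (eLpNorm X q μ).toReal * (((2 * N) ^ (q'.toReal - 1)
              * (4 * alphaMix μ m₁ m₂ * N)) ^ (1 / q'.toReal))
              ≤ (eLpNorm X q μ).toReal * (4 * alphaMix μ m₁ m₂ ^ (s + v) * N) :=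
            mul_le_mul_of_nonneg_left hmain_le ha0
          rw [htail_eq] at hk
          have h6 : (eLpNorm X q μ).toReal * (4 * alphaMix μ m₁ m₂ ^ (s + v) * N)
              = 4 * alphaMix μ m₁ m₂ ^ v * (eLpNorm X q μ).toReal
                * (eLpNorm Y p μ).toReal := by
            calc (eLpNorm X q μ).toReal * (4 * alphaMix μ m₁ m₂ ^ (s + v) * N)
                = 4 * (eLpNorm X q μ).toReal * (alphaMix μ m₁ m₂ ^ (s + v) * N) := by ring
              _ = 4 * (eLpNorm X q μ).toReal
                  * ((eLpNorm Y p μ).toReal * alphaMix μ m₁ m₂ ^ v) := by rw [hNval]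
              _ = 4 * alphaMix μ m₁ m₂ ^ v * (eLpNorm X q μ).toReal
                  * (eLpNorm Y p μ).toReal := by ring
          have hstep2 : (eLpNorm X q μ).toReal * (((2 * N) ^ (q'.toReal - 1)
              * (4 * alphaMix μ m₁ m₂ * N)) ^ (1 / q'.toReal))
              ≤ 4 * alphaMix μ m₁ m₂ ^ v * (eLpNorm X q μ).toReal
                * (eLpNorm Y p μ).toReal := by
            rw [← h6]; exact hstep
          have h7 : 2 * (eLpNorm X q μ).toReal
              * ((eLpNorm Y p μ).toReal * alphaMix μ m₁ m₂ ^ v)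
              = 2 * alphaMix μ m₁ m₂ ^ v * (eLpNorm X q μ).toReal
                * (eLpNorm Y p μ).toReal := by ring
          rw [h7] at hk
          linarith only [hk, hstep2]
        have hαv : (0:ℝ) ≤ alphaMix μ m₁ m₂ ^ v := Real.rpow_nonneg hα0 _
        exact le_trans hfinal (six_mul_le_two_pi hαv ha0 hb0)
end
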